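/- arXiv:1602.01201 — 3 statements merged into one kernel-verified Lean document; each statement's English description precedes it below -/
import Mathlib

section
/- For ⃗v = (v₁, v₂) ∈ H¹(ℝ,ℂ)², the second variation of S_ω at ⃗φ_ω decomposes as ⟨S_ω''(⃗φ_ω)⃗v, ⃗v⟩ = ⟨L₃ Re v₁, Re v₁⟩ + ⟨L₁ Im v₁, Im v₁⟩ + ⟨L_{γ/κ₁} Re v₂, Re v₂⟩ + ⟨L_{−γ/κ₁} Im v₂, Im v₂⟩. -/
open MeasureTheory Real Asymptotics

/-- The soliton profile `φ_ω(x) = √(2ω) sech(√ω x)`, with `sech y = 1 / cosh y`. -/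
noncomputable def phiW (ω x : ℝ) : ℝ :=
  Real.sqrt (2 * ω) * (1 / Real.cosh (Real.sqrt ω * x))

/-- The linearized operator `L_a u = -u'' + ω u - a φ_ω² u`. -/
noncomputable def Lop (ω a : ℝ) (u : ℝ → ℝ) (x : ℝ) : ℝ :=
  -(deriv (deriv u) x) + ω * u x - a * (phiW ω x) ^ 2 * u x

/-- The quadratic form `⟨L_a u, u⟩ = ∫ (|u'|² + ω u² - a φ_ω² u²)`. -/
noncomputable def QLa (ω a : ℝ) (u : ℝ → ℝ) : ℝ :=
  ∫ x : ℝ, ((deriv u x) ^ 2 + ω * (u x) ^ 2 - a * (phiW ω x) ^ 2 * (u x) ^ 2)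

/-- Pairs of complex-valued functions on ℝ. -/
abbrev Pair := (ℝ → ℂ) × (ℝ → ℂ)

/-- The energy functional `E`. -/
noncomputable def En (κ₁ κ₂ γ : ℝ) (u : Pair) : ℝ :=
  ((1 / 2) * ∫ x : ℝ, ‖deriv u.1 x‖ ^ 2) - ((κ₁ / 4) * ∫ x : ℝ, ‖u.1 x‖ ^ 4)
  + ((1 / 2) * ∫ x : ℝ, ‖deriv u.2 x‖ ^ 2) - ((κ₂ / 4) * ∫ x : ℝ, ‖u.2 x‖ ^ 4)
  - (γ / 2) * (∫ x : ℝ, (u.1 x) ^ 2 * (starRingEnd ℂ (u.2 x)) ^ 2).re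

/-- The charge functional `Q`. -/
noncomputable def Qm (u : Pair) : ℝ :=
  (1 / 2) * ((∫ x : ℝ, ‖u.1 x‖ ^ 2) + ∫ x : ℝ, ‖u.2 x‖ ^ 2)

/-- The action `S_ω = E + ω Q`. -/
noncomputable def Sfun (κ₁ κ₂ γ ω : ℝ) (u : Pair) : ℝ :=
  En κ₁ κ₂ γ u + ω * Qm u

/-- The semitrivial profile `⃗φ_ω = (κ₁^{-1/2} φ_ω, 0)`. -/
noncomputable def phivec (κ₁ ω : ℝ) : Pair :=
  (fun x => ((phiW ω x / Real.sqrt κ₁ : ℝ) : ℂ), fun _ => 0)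

/-- The profile `⃗ψ_ω = (0, κ₁^{-1/2} φ_ω)`. -/
noncomputable def psivec (κ₁ ω : ℝ) : Pair :=
  (fun _ => 0, fun x => ((phiW ω x / Real.sqrt κ₁ : ℝ) : ℂ))

/-- Real `L²`-inner product on pairs: `(⃗u,⃗v)_H = Σ_j Re ∫ u_j \bar v_j`. -/
noncomputable def Hinner (u v : Pair) : ℝ :=
  (∫ x : ℝ, (u.1 x) * (starRingEnd ℂ (v.1 x))).re
  + (∫ x : ℝ, (u.2 x) * (starRingEnd ℂ (v.2 x))).re

/-- Multiplication of a pair by `i`. -/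
noncomputable def Ivec (u : Pair) : Pair :=
  (fun x => Complex.I * u.1 x, fun x => Complex.I * u.2 x)

/-- Squared `X = H¹(ℝ,ℂ)²` norm. -/
noncomputable def XnormSq (u : Pair) : ℝ :=
  (∫ x : ℝ, ‖u.1 x‖ ^ 2) + (∫ x : ℝ, ‖deriv u.1 x‖ ^ 2)
  + (∫ x : ℝ, ‖u.2 x‖ ^ 2) + (∫ x : ℝ, ‖deriv u.2 x‖ ^ 2)

/-- Squared `H¹(ℝ,ℝ)` norm. -/
noncomputable def H1normSq (v : ℝ → ℝ) : ℝ :=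
  (∫ x : ℝ, (v x) ^ 2) + (∫ x : ℝ, (deriv v x) ^ 2)

/-- Membership in `H¹(ℝ,ℝ)`. -/
noncomputable def InH1r (v : ℝ → ℝ) : Prop :=
  Differentiable ℝ v ∧ MemLp v 2 (volume : Measure ℝ) ∧
    MemLp (deriv v) 2 (volume : Measure ℝ)

/-- Membership in `H¹(ℝ,ℂ)`. -/
noncomputable def InH1c (v : ℝ → ℂ) : Prop :=
  Differentiable ℝ v ∧ MemLp v 2 (volume : Measure ℝ) ∧
    MemLp (deriv v) 2 (volume : Measure ℝ)

/-- Membership of a pair in `X = H¹(ℝ,ℂ)²` with even symmetry. -/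
noncomputable def InXeven (u : Pair) : Prop :=
  InH1c u.1 ∧ InH1c u.2 ∧ (∀ x, u.1 (-x) = u.1 x) ∧ (∀ x, u.2 (-x) = u.2 x)



-- norm squared of a complex number via re/im
lemma normsq_eq (z : ℂ) : ‖z‖^2 = z.re^2 + z.im^2 := by
  rw [Complex.sq_norm, Complex.normSq_apply]; ring

lemma norm_sq_add_smul (a : ℝ) (w : ℂ) (t : ℝ) :
    ‖(a:ℂ) + t • w‖^2 = a^2 + t * (2 * (a * w.re)) + t^2 * ‖w‖^2 := by
  rw [normsq_eq, normsq_eq]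
  simp [Complex.real_smul, Complex.add_re, Complex.add_im, Complex.mul_re, Complex.mul_im]
  ring

lemma norm_pow4_add_smul (a : ℝ) (w : ℂ) (t : ℝ) :
    ‖(a:ℂ) + t • w‖^4 = a^4 + t * (4*a^3*w.re)
      + t^2 * (2*a^2*‖w‖^2 + 4*a^2*w.re^2) + t^3 * (4*a*w.re*‖w‖^2) + t^4 * (‖w‖^2)^2 := by
  have h : ‖(a:ℂ) + t • w‖^4 = (‖(a:ℂ) + t • w‖^2)^2 := by ring
  rw [h, norm_sq_add_smul, normsq_eq]
  ring

lemma norm_smul_sq (t : ℝ) (w : ℂ) : ‖t • w‖^2 = t^2 * ‖w‖^2 := by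
  rw [norm_smul]; simp [mul_pow, sq_abs]

lemma norm_smul_pow4 (t : ℝ) (w : ℂ) : ‖t • w‖^4 = t^4 * ‖w‖^4 := by
  rw [norm_smul, Real.norm_eq_abs, mul_pow, Even.pow_abs ⟨2, rfl⟩]

lemma iteratedDeriv_two_poly (a0 a1 a2 a3 a4 : ℝ) :
    iteratedDeriv 2 (fun t : ℝ => a0 + a1*t + a2*t^2 + a3*t^3 + a4*t^4) 0 = 2*a2 := by
  have h1 : ∀ t : ℝ, HasDerivAt (fun t : ℝ => a0 + a1*t + a2*t^2 + a3*t^3 + a4*t^4)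
      (a1 + 2*a2*t + 3*a3*t^2 + 4*a4*t^3) t := by
    intro t
    have h := (((hasDerivAt_const t a0).add ((hasDerivAt_id t).const_mul a1)).add
      ((hasDerivAt_pow 2 t).const_mul a2)).add
      ((((hasDerivAt_pow 3 t).const_mul a3)).add ((hasDerivAt_pow 4 t).const_mul a4))
    refine (h.congr_of_eventuallyEq (Filter.Eventually.of_forall fun y => ?_)).congr_deriv ?_
    · simp only [Pi.add_apply, id]; ring
    · push_cast; ring
  have h2 : ∀ t : ℝ, HasDerivAt (fun t : ℝ => a1 + 2*a2*t + 3*a3*t^2 + 4*a4*t^3)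
      (2*a2 + 6*a3*t + 12*a4*t^2) t := by
    intro t
    have h := ((hasDerivAt_const t a1).add ((hasDerivAt_id t).const_mul (2*a2))).add
      ((((hasDerivAt_pow 2 t).const_mul (3*a3))).add ((hasDerivAt_pow 3 t).const_mul (4*a4)))
    refine (h.congr_of_eventuallyEq (Filter.Eventually.of_forall fun y => ?_)).congr_deriv ?_
    · simp only [Pi.add_apply, id]; ring
    · push_cast; ring
  have hd1 : deriv (fun t : ℝ => a0 + a1*t + a2*t^2 + a3*t^3 + a4*t^4)
      = fun t : ℝ => a1 + 2*a2*t + 3*a3*t^2 + 4*a4*t^3 := funext fun t => (h1 t).deriv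
  rw [iteratedDeriv_succ, iteratedDeriv_one, hd1]
  have := (h2 0).deriv
  rw [this]; norm_num

lemma InH1c.integrable_sq_norm {f : ℝ → ℂ} (hf : InH1c f) :
    Integrable (fun x => ‖f x‖^2) volume :=
  (memLp_two_iff_integrable_sq_norm hf.2.1.1).1 hf.2.1

lemma InH1c.integrable_sq_norm_deriv {f : ℝ → ℂ} (hf : InH1c f) :
    Integrable (fun x => ‖deriv f x‖^2) volume :=
  (memLp_two_iff_integrable_sq_norm hf.2.2.1).1 hf.2.2

lemma InH1c.norm_bound {f : ℝ → ℂ} (hf : InH1c f) : ∃ C : ℝ, 0 ≤ C ∧ ∀ x, ‖f x‖ ≤ C := by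
  obtain ⟨hd, hf2, hf'2⟩ := hf
  set g : ℝ → ℝ := fun x => ‖f x‖^2 with hg
  set h : ℝ → ℝ := fun x =>
    2*((f x).re*(deriv f x).re) + 2*((f x).im*(deriv f x).im) with hh
  have hgd : ∀ x, HasDerivAt g (h x) x := by
    intro x
    have hfx : HasDerivAt f (deriv f x) x := (hd x).hasDerivAt
    have hre : HasDerivAt (fun x => (f x).re) ((deriv f x).re) x :=
      Complex.reCLM.hasFDerivAt.comp_hasDerivAt x hfx
    have him : HasDerivAt (fun x => (f x).im) ((deriv f x).im) x :=
      Complex.imCLM.hasFDerivAt.comp_hasDerivAt x hfx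
    have hsum := (hre.pow 2).add (him.pow 2)
    have hgeq : g = fun x => (f x).re^2 + (f x).im^2 := funext fun x => normsq_eq (f x)
    rw [hgeq]
    refine hsum.congr_deriv ?_
    rw [hh]; push_cast; ring
  have hfsq : Integrable (fun x => ‖f x‖^2) volume :=
    (memLp_two_iff_integrable_sq_norm hf2.1).1 hf2
  have hf'sq : Integrable (fun x => ‖deriv f x‖^2) volume :=
    (memLp_two_iff_integrable_sq_norm hf'2.1).1 hf'2
  have h1m : AEStronglyMeasurable f volume := hf2.1
  have h2m : AEStronglyMeasurable (deriv f) volume := hf'2.1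
  have hmeas : AEStronglyMeasurable h volume := by
    exact (((Complex.continuous_re.comp_aestronglyMeasurable h1m).mul
      (Complex.continuous_re.comp_aestronglyMeasurable h2m)).const_mul 2).add
      (((Complex.continuous_im.comp_aestronglyMeasurable h1m).mul
      (Complex.continuous_im.comp_aestronglyMeasurable h2m)).const_mul 2)
  have hbd : ∀ x, |h x| ≤ ‖f x‖^2 + ‖deriv f x‖^2 := by
    intro x
    have hrw : (f x).re*(deriv f x).re + (f x).im*(deriv f x).im
        = ((starRingEnd ℂ (f x)) * deriv f x).re := by
      simp [Complex.mul_re]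
    have key : |(f x).re*(deriv f x).re + (f x).im*(deriv f x).im| ≤ ‖f x‖*‖deriv f x‖ := by
      rw [hrw]
      calc |((starRingEnd ℂ (f x)) * deriv f x).re|
          ≤ ‖(starRingEnd ℂ (f x)) * deriv f x‖ := Complex.abs_re_le_norm _
        _ = ‖f x‖*‖deriv f x‖ := by
            rw [norm_mul]; simp
    have h2ab : 2*(‖f x‖*‖deriv f x‖) ≤ ‖f x‖^2 + ‖deriv f x‖^2 := by
      nlinarith [sq_nonneg (‖f x‖ - ‖deriv f x‖)]
    have : |h x| = 2*|(f x).re*(deriv f x).re + (f x).im*(deriv f x).im| := by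
      show |2 * ((f x).re * (deriv f x).re) + 2 * ((f x).im * (deriv f x).im)| = _
      rw [show 2*((f x).re*(deriv f x).re) + 2*((f x).im*(deriv f x).im)
        = 2*((f x).re*(deriv f x).re + (f x).im*(deriv f x).im) by ring, abs_mul]
      norm_num
    rw [this]
    nlinarith [key]
  have hint : Integrable h volume := by
    apply Integrable.mono' (hfsq.add hf'sq) hmeas
    filter_upwards with x
    simpa [Real.norm_eq_abs] using hbd x
  set M := ∫ x, |h x| with hM
  have hM0 : 0 ≤ M := integral_nonneg fun x => abs_nonneg _
  have key : ∀ x, g x ≤ g 0 + M := by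
    intro x
    have hFTC : ∫ t in (0:ℝ)..x, h t = g x - g 0 :=
      intervalIntegral.integral_eq_sub_of_hasDerivAt (fun t _ => hgd t)
        hint.intervalIntegrable
    have h1 : |∫ t in (0:ℝ)..x, h t| ≤ ∫ t in Set.uIoc 0 x, |h t| := by
      simpa [Real.norm_eq_abs] using
        intervalIntegral.norm_integral_le_integral_norm_uIoc (f := h) (a := 0) (b := x)
          (μ := volume)
    have h2 : ∫ t in Set.uIoc 0 x, |h t| ≤ M :=
      setIntegral_le_integral hint.abs (Filter.Eventually.of_forall fun t => abs_nonneg _)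
    have h3 := le_abs_self (∫ t in (0:ℝ)..x, h t)
    linarith [hFTC ▸ h3]
  refine ⟨Real.sqrt (g 0 + M), Real.sqrt_nonneg _, fun x => ?_⟩
  have h0 : ‖f x‖ = Real.sqrt (g x) := by
    rw [hg]; simp [Real.sqrt_sq (norm_nonneg _)]
  rw [h0]; exact Real.sqrt_le_sqrt (key x)

noncomputable def phiW' (ω x : ℝ) : ℝ :=
  Real.sqrt (2*ω) * (-(Real.sinh (Real.sqrt ω * x) * Real.sqrt ω) / Real.cosh (Real.sqrt ω * x)^2)

lemma phiW_hasDerivAt (ω x : ℝ) : HasDerivAt (phiW ω) (phiW' ω x) x := by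
  have h1 : HasDerivAt (fun y : ℝ => Real.sqrt ω * y) (Real.sqrt ω) x := by
    simpa using (hasDerivAt_id x).const_mul (Real.sqrt ω)
  have h2 : HasDerivAt (fun y => Real.cosh (Real.sqrt ω * y))
      (Real.sinh (Real.sqrt ω * x) * Real.sqrt ω) x := (Real.hasDerivAt_cosh _).comp x h1
  have h3 := h2.inv (ne_of_gt (Real.cosh_pos _))
  have h4 := h3.const_mul (Real.sqrt (2*ω))
  have heq : phiW ω = fun y => Real.sqrt (2*ω) * (Real.cosh (Real.sqrt ω * y))⁻¹ := by
    funext y; simp [phiW, one_div]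
  rw [heq, phiW']
  exact h4

lemma phiW_cont (ω : ℝ) : Continuous (phiW ω) :=
  continuous_const.mul (continuous_const.div
    (Real.continuous_cosh.comp (continuous_const.mul continuous_id))
    (fun x => ne_of_gt (Real.cosh_pos _)))

lemma phiW'_cont (ω : ℝ) : Continuous (phiW' ω) := by
  apply continuous_const.mul
  apply Continuous.div
  · exact ((Real.continuous_sinh.comp (continuous_const.mul continuous_id)).mul
      continuous_const).neg
  · exact (Real.continuous_cosh.comp (continuous_const.mul continuous_id)).pow 2
  · exact fun x => pow_ne_zero _ (ne_of_gt (Real.cosh_pos _))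

lemma abs_sinh_le_cosh (t : ℝ) : |Real.sinh t| ≤ Real.cosh t := by
  have h1 : Real.cosh t ^ 2 = Real.sinh t ^2 + 1 := Real.cosh_sq t
  have h2 : 0 < Real.cosh t := Real.cosh_pos t
  nlinarith [abs_nonneg (Real.sinh t), sq_abs (Real.sinh t)]

lemma cosh_sq_ge (k x : ℝ) : min 1 (k^2) * (1+x^2) ≤ Real.cosh (k*x)^2 := by
  have h1 : |k*x| ≤ Real.sinh |k*x| := by
    rw [Real.self_le_sinh_iff]; exact abs_nonneg _
  have h2 : (k*x)^2 ≤ Real.sinh (k*x)^2 := by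
    have := Real.abs_sinh (k*x)
    nlinarith [abs_nonneg (k*x), sq_abs (k*x), sq_abs (Real.sinh (k*x))]
  have h3 : (k*x)^2 + 1 ≤ Real.cosh (k*x)^2 := by rw [Real.cosh_sq]; nlinarith
  have h4 : min 1 (k^2) ≤ 1 := min_le_left _ _
  have h5 : min 1 (k^2) ≤ k^2 := min_le_right _ _
  nlinarith [sq_nonneg x, sq_nonneg k, sq_nonneg (k*x)]

lemma integrable_sech_sq {k : ℝ} (hk : 0 < k) :
    Integrable (fun x => ((Real.cosh (k*x))⁻¹)^2) volume := by
  have hc : Continuous fun x : ℝ => ((Real.cosh (k*x))⁻¹)^2 :=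
    ((Real.continuous_cosh.comp (continuous_const.mul continuous_id)).inv₀
      (fun x => ne_of_gt (Real.cosh_pos _))).pow 2
  apply Integrable.mono' (integrable_inv_one_add_sq.const_mul ((min 1 (k^2))⁻¹))
    hc.aestronglyMeasurable
  filter_upwards with x
  have hmin : 0 < min 1 (k^2) := lt_min one_pos (pow_pos hk 2)
  have h1 : 0 < 1 + x^2 := by positivity
  have hle := cosh_sq_ge k x
  rw [Real.norm_eq_abs, abs_of_nonneg (by positivity)]
  have h2 : ((Real.cosh (k*x))^2)⁻¹ ≤ (min 1 (k^2) * (1+x^2))⁻¹ :=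
    inv_anti₀ (by positivity) hle
  calc ((Real.cosh (k*x))⁻¹)^2 = ((Real.cosh (k*x))^2)⁻¹ := by rw [inv_pow]
    _ ≤ (min 1 (k^2) * (1+x^2))⁻¹ := h2
    _ = (min 1 (k^2))⁻¹ * (1+x^2)⁻¹ := by rw [mul_inv]

lemma phiW_abs_le {ω : ℝ} (hω : 0 < ω) (x : ℝ) : |phiW ω x| ≤ Real.sqrt (2*ω) := by
  have h1 : (0:ℝ) < Real.cosh (Real.sqrt ω * x) := Real.cosh_pos _
  have h2 : (1:ℝ) ≤ Real.cosh (Real.sqrt ω * x) := Real.one_le_cosh _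
  have h3 : (0:ℝ) ≤ Real.sqrt (2*ω) := Real.sqrt_nonneg _
  rw [phiW, abs_of_nonneg (by positivity)]
  calc Real.sqrt (2*ω) * (1 / Real.cosh (Real.sqrt ω * x))
      ≤ Real.sqrt (2*ω) * 1 := by
        apply mul_le_mul_of_nonneg_left _ h3
        rw [div_le_one h1]; exact h2
    _ = Real.sqrt (2*ω) := mul_one _

lemma phiW'_abs_le {ω : ℝ} (hω : 0 < ω) (x : ℝ) :
    |phiW' ω x| ≤ (Real.sqrt (2*ω) * Real.sqrt ω) * (Real.cosh (Real.sqrt ω * x))⁻¹ := by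
  have hc : (0:ℝ) < Real.cosh (Real.sqrt ω * x) := Real.cosh_pos _
  have hs := abs_sinh_le_cosh (Real.sqrt ω * x)
  rw [phiW', abs_mul, abs_of_nonneg (Real.sqrt_nonneg (2*ω)), abs_div, abs_neg, abs_mul,
    abs_of_nonneg (Real.sqrt_nonneg ω)]
  rw [abs_of_nonneg (by positivity : (0:ℝ) ≤ Real.cosh (Real.sqrt ω * x)^2)]
  rw [mul_assoc]
  apply mul_le_mul_of_nonneg_left _ (Real.sqrt_nonneg (2*ω))
  rw [div_le_iff₀ (by positivity)]
  have : Real.sqrt ω * (Real.cosh (Real.sqrt ω * x))⁻¹ * Real.cosh (Real.sqrt ω * x)^2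
      = Real.sqrt ω * Real.cosh (Real.sqrt ω * x) := by
    field_simp
  rw [this]
  have := mul_le_mul_of_nonneg_right hs (Real.sqrt_nonneg ω)
  nlinarith [Real.sqrt_nonneg ω, abs_nonneg (Real.sinh (Real.sqrt ω * x))]

lemma integrable_phiW_sq {ω : ℝ} (hω : 0 < ω) :
    Integrable (fun x => (phiW ω x)^2) volume := by
  have h := (integrable_sech_sq (Real.sqrt_pos.2 hω)).const_mul (2*ω)
  apply h.congr
  filter_upwards with x
  rw [phiW]
  rw [mul_pow, div_pow, one_pow, Real.sq_sqrt (by linarith : (0:ℝ) ≤ 2*ω)]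
  rw [inv_pow, inv_eq_one_div]

lemma integrable_phiW'_sq {ω : ℝ} (hω : 0 < ω) :
    Integrable (fun x => (phiW' ω x)^2) volume := by
  have h := (integrable_sech_sq (Real.sqrt_pos.2 hω)).const_mul (2*ω*ω)
  apply Integrable.mono' h ((phiW'_cont ω).pow 2).aestronglyMeasurable
  filter_upwards with x
  rw [Real.norm_eq_abs, abs_of_nonneg (sq_nonneg _)]
  have hb := phiW'_abs_le hω x
  have h0 : (0:ℝ) ≤ (Real.cosh (Real.sqrt ω * x))⁻¹ := by positivity
  have h1 : (phiW' ω x)^2 ≤ ((Real.sqrt (2*ω) * Real.sqrt ω) * (Real.cosh (Real.sqrt ω * x))⁻¹)^2 := by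
    rw [← sq_abs (phiW' ω x)]
    apply pow_le_pow_left₀ (abs_nonneg _) hb
  calc (phiW' ω x)^2 ≤ ((Real.sqrt (2*ω) * Real.sqrt ω) * (Real.cosh (Real.sqrt ω * x))⁻¹)^2 := h1
    _ = 2*ω*ω * ((Real.cosh (Real.sqrt ω * x))⁻¹)^2 := by
        rw [mul_pow, mul_pow, Real.sq_sqrt (by linarith : (0:ℝ) ≤ 2*ω),
          Real.sq_sqrt hω.le]

lemma integrable_mul_of_sq {f g : ℝ → ℝ}
    (hf : Integrable (fun x => f x^2) volume) (hg : Integrable (fun x => g x^2) volume)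
    (hm : AEStronglyMeasurable (fun x => f x * g x) volume) :
    Integrable (fun x => f x * g x) volume := by
  apply Integrable.mono' (hf.add hg) hm
  filter_upwards with x
  rw [Real.norm_eq_abs, abs_mul]
  simp only [Pi.add_apply]
  nlinarith [sq_nonneg (|f x| - |g x|), sq_abs (f x), sq_abs (g x), abs_nonneg (f x),
    abs_nonneg (g x)]

lemma integral_poly2 {A B C : ℝ → ℝ} (hA : Integrable A volume) (hB : Integrable B volume)
    (hC : Integrable C volume) (s u : ℝ) :
    ∫ x, (A x + s * B x + u * C x) = (∫ x, A x) + s*(∫ x, B x) + u*(∫ x, C x) := by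
  have h1 : Integrable (fun x => A x + s * B x) volume := hA.add (hB.const_mul s)
  have h2 : Integrable (fun x => u * C x) volume := hC.const_mul u
  rw [integral_add h1 h2, integral_add hA (hB.const_mul s), integral_const_mul,
    integral_const_mul]

lemma integral_poly4 {A B C D E : ℝ → ℝ} (hA : Integrable A volume) (hB : Integrable B volume)
    (hC : Integrable C volume) (hD : Integrable D volume) (hE : Integrable E volume)
    (s u w z : ℝ) :
    ∫ x, (A x + s * B x + u * C x + w * D x + z * E x)
      = (∫ x, A x) + s*(∫ x, B x) + u*(∫ x, C x) + w*(∫ x, D x) + z*(∫ x, E x) := by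
  have h1 : Integrable (fun x => A x + s * B x) volume := hA.add (hB.const_mul s)
  have h2 : Integrable (fun x => A x + s * B x + u * C x) volume := h1.add (hC.const_mul u)
  have h3 : Integrable (fun x => A x + s * B x + u * C x + w * D x) volume :=
    h2.add (hD.const_mul w)
  rw [integral_add h3 (hE.const_mul z), integral_add h2 (hD.const_mul w),
    integral_add h1 (hC.const_mul u), integral_add hA (hB.const_mul s), integral_const_mul,
    integral_const_mul, integral_const_mul, integral_const_mul]

lemma integral_comb3 {A B C : ℝ → ℝ} (hA : Integrable A volume) (hB : Integrable B volume)
    (hC : Integrable C volume) (c1 c2 : ℝ) :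
    ∫ x, (A x + c1 * B x - c2 * C x) = (∫ x, A x) + c1*(∫ x, B x) - c2*(∫ x, C x) := by
  have h1 : Integrable (fun x => A x + c1 * B x) volume := hA.add (hB.const_mul c1)
  rw [integral_sub h1 (hC.const_mul c2), integral_add hA (hB.const_mul c1),
    integral_const_mul, integral_const_mul]

lemma re_sq_le_norm_sq (z : ℂ) : z.re^2 ≤ ‖z‖^2 := by
  rw [normsq_eq]; nlinarith [sq_nonneg z.im]

lemma im_sq_le_norm_sq (z : ℂ) : z.im^2 ≤ ‖z‖^2 := by
  rw [normsq_eq]; nlinarith [sq_nonneg z.re]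

lemma re_ofReal_sq_mul_conj_sq (a : ℝ) (w : ℂ) :
    (((a:ℂ))^2 * ((starRingEnd ℂ) w)^2).re = a^2 * (w.re^2 - w.im^2) := by
  simp only [pow_two, Complex.mul_re, Complex.mul_im, Complex.conj_re, Complex.conj_im,
    Complex.ofReal_re, Complex.ofReal_im]
  ring

set_option maxHeartbeats 2000000 in
/-- decomposition of the second variation of `S_ω` at `⃗φ_ω`:
`⟨S_ω''(⃗φ_ω)⃗v,⃗v⟩ = ⟨L₃ Re v₁,Re v₁⟩ + ⟨L₁ Im v₁,Im v₁⟩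
 + ⟨L_{γ/κ₁} Re v₂,Re v₂⟩ + ⟨L_{-γ/κ₁} Im v₂,Im v₂⟩`. -/
theorem second_variation_decomposition (κ₁ κ₂ γ ω : ℝ)
    (hκ₁ : 0 < κ₁) (hκ₂ : 0 < κ₂) (hγ : 0 < γ) (hω : 0 < ω) :
    ∀ v : Pair, InH1c v.1 → InH1c v.2 →
      iteratedDeriv 2 (fun t : ℝ => Sfun κ₁ κ₂ γ ω (phivec κ₁ ω + t • v)) 0
        = QLa ω 3 (fun x => (v.1 x).re) + QLa ω 1 (fun x => (v.1 x).im)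
          + QLa ω (γ / κ₁) (fun x => (v.2 x).re)
          + QLa ω (-(γ / κ₁)) (fun x => (v.2 x).im) := by
  intro v hv1 hv2
  obtain ⟨D₁, hD₁0, hD₁⟩ := hv1.norm_bound
  obtain ⟨D₂, hD₂0, hD₂⟩ := hv2.norm_bound
  have hsκ : (0:ℝ) < Real.sqrt κ₁ := Real.sqrt_pos.2 hκ₁
  -- the real profile and its derivative
  set φ : ℝ → ℝ := fun x => phiW ω x / Real.sqrt κ₁ with hφdef
  set φ' : ℝ → ℝ := fun x => phiW' ω x / Real.sqrt κ₁ with hφ'def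
  have hφd : ∀ x, HasDerivAt φ (φ' x) x := fun x => (phiW_hasDerivAt ω x).div_const _
  have cφ : Continuous φ := (phiW_cont ω).div_const _
  have cφ' : Continuous φ' := (phiW'_cont ω).div_const _
  set Bφ : ℝ := Real.sqrt (2*ω) / Real.sqrt κ₁ with hBφdef
  have hBφ0 : 0 ≤ Bφ := div_nonneg (Real.sqrt_nonneg _) (Real.sqrt_nonneg _)
  have hBφ : ∀ x, |φ x| ≤ Bφ := by
    intro x
    rw [hφdef, hBφdef, abs_div, abs_of_nonneg hsκ.le]
    exact div_le_div_of_nonneg_right (phiW_abs_le hω x) hsκ.le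
  -- continuity / measurability
  have cv1 : Continuous v.1 := hv1.1.continuous
  have cv2 : Continuous v.2 := hv2.1.continuous
  have cr1 : Continuous (fun x => (v.1 x).re) := Complex.continuous_re.comp cv1
  have ci1 : Continuous (fun x => (v.1 x).im) := Complex.continuous_im.comp cv1
  have cr2 : Continuous (fun x => (v.2 x).re) := Complex.continuous_re.comp cv2
  have ci2 : Continuous (fun x => (v.2 x).im) := Complex.continuous_im.comp cv2
  have md1 : AEStronglyMeasurable (deriv v.1) volume := hv1.2.2.1
  have md2 : AEStronglyMeasurable (deriv v.2) volume := hv2.2.2.1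
  have mdr1 : AEStronglyMeasurable (fun x => (deriv v.1 x).re) volume :=
    Complex.continuous_re.comp_aestronglyMeasurable md1
  have mdi1 : AEStronglyMeasurable (fun x => (deriv v.1 x).im) volume :=
    Complex.continuous_im.comp_aestronglyMeasurable md1
  have mdr2 : AEStronglyMeasurable (fun x => (deriv v.2 x).re) volume :=
    Complex.continuous_re.comp_aestronglyMeasurable md2
  have mdi2 : AEStronglyMeasurable (fun x => (deriv v.2 x).im) volume :=
    Complex.continuous_im.comp_aestronglyMeasurable md2
  -- basic square integrability
  have is1 : Integrable (fun x => ‖v.1 x‖^2) volume := hv1.integrable_sq_norm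
  have is2 : Integrable (fun x => ‖v.2 x‖^2) volume := hv2.integrable_sq_norm
  have ids1 : Integrable (fun x => ‖deriv v.1 x‖^2) volume := hv1.integrable_sq_norm_deriv
  have ids2 : Integrable (fun x => ‖deriv v.2 x‖^2) volume := hv2.integrable_sq_norm_deriv
  have compsq : ∀ (f : ℝ → ℂ), Integrable (fun x => ‖f x‖^2) volume →
      ∀ (g : ℝ → ℝ), AEStronglyMeasurable g volume → (∀ x, g x^2 ≤ ‖f x‖^2) →
      Integrable (fun x => g x^2) volume := by
    intro f hf g hg hle
    have hgm : AEStronglyMeasurable (fun x => g x^2) volume := by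
      apply (hg.mul hg).congr
      filter_upwards with x; simp [pow_two]
    apply hf.mono' hgm
    filter_upwards with x
    rw [Real.norm_eq_abs, abs_of_nonneg (sq_nonneg _)]
    exact hle x
  have ir1 : Integrable (fun x => (v.1 x).re^2) volume :=
    compsq v.1 is1 _ cr1.aestronglyMeasurable fun x => re_sq_le_norm_sq _
  have ii1 : Integrable (fun x => (v.1 x).im^2) volume :=
    compsq v.1 is1 _ ci1.aestronglyMeasurable fun x => im_sq_le_norm_sq _
  have ir2 : Integrable (fun x => (v.2 x).re^2) volume :=
    compsq v.2 is2 _ cr2.aestronglyMeasurable fun x => re_sq_le_norm_sq _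
  have ii2 : Integrable (fun x => (v.2 x).im^2) volume :=
    compsq v.2 is2 _ ci2.aestronglyMeasurable fun x => im_sq_le_norm_sq _
  have idr1 : Integrable (fun x => (deriv v.1 x).re^2) volume :=
    compsq _ ids1 _ mdr1 fun x => re_sq_le_norm_sq _
  have idi1 : Integrable (fun x => (deriv v.1 x).im^2) volume :=
    compsq _ ids1 _ mdi1 fun x => im_sq_le_norm_sq _
  have idr2 : Integrable (fun x => (deriv v.2 x).re^2) volume :=
    compsq _ ids2 _ mdr2 fun x => re_sq_le_norm_sq _
  have idi2 : Integrable (fun x => (deriv v.2 x).im^2) volume :=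
    compsq _ ids2 _ mdi2 fun x => im_sq_le_norm_sq _
  -- φ-based integrability
  have hφsq : ∀ x, φ x^2 = (phiW ω x)^2 / κ₁ := by
    intro x; rw [hφdef]; rw [div_pow, Real.sq_sqrt hκ₁.le]
  have hφ'sq : ∀ x, φ' x^2 = (phiW' ω x)^2 / κ₁ := by
    intro x; rw [hφ'def]; rw [div_pow, Real.sq_sqrt hκ₁.le]
  have iφ2 : Integrable (fun x => φ x^2) volume := by
    apply ((integrable_phiW_sq hω).div_const κ₁).congr
    filter_upwards with x; rw [hφsq x]
  have iφ'2 : Integrable (fun x => φ' x^2) volume := by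
    apply ((integrable_phiW'_sq hω).div_const κ₁).congr
    filter_upwards with x; rw [hφ'sq x]
  have hφBsq : ∀ x, φ x^2 ≤ Bφ^2 := by
    intro x; rw [← sq_abs]; exact pow_le_pow_left₀ (abs_nonneg _) (hBφ x) 2
  -- products
  have iφr1 : Integrable (fun x => φ x * (v.1 x).re) volume :=
    integrable_mul_of_sq iφ2 ir1 (cφ.mul cr1).aestronglyMeasurable
  have iK1 : Integrable (fun x => φ' x * (deriv v.1 x).re) volume :=
    integrable_mul_of_sq iφ'2 idr1 (cφ'.aestronglyMeasurable.mul mdr1)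
  have iφ4 : Integrable (fun x => φ x^4) volume := by
    apply Integrable.mono' (iφ2.const_mul (Bφ^2)) ((cφ.pow 4).aestronglyMeasurable)
    filter_upwards with x
    simp only [Pi.pow_apply, Pi.mul_apply]
    rw [Real.norm_eq_abs, abs_of_nonneg (by positivity)]
    nlinarith [hφBsq x, sq_nonneg (φ x), sq_nonneg (φ x^2)]
  have iQ1 : Integrable (fun x => φ x^3 * (v.1 x).re) volume := by
    apply Integrable.mono' (iφr1.abs.const_mul (Bφ^2))
      (((cφ.pow 3).mul cr1).aestronglyMeasurable)
    filter_upwards with x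
    simp only [Pi.pow_apply, Pi.mul_apply]
    rw [Real.norm_eq_abs, abs_mul, abs_pow]
    calc |φ x|^3 * |(v.1 x).re| = |φ x|^2 * (|φ x| * |(v.1 x).re|) := by ring
      _ ≤ Bφ^2 * (|φ x| * |(v.1 x).re|) := by
          apply mul_le_mul_of_nonneg_right _ (by positivity)
          exact pow_le_pow_left₀ (abs_nonneg _) (hBφ x) 2
      _ = Bφ^2 * |φ x * (v.1 x).re| := by rw [abs_mul]
  have iQ2a : Integrable (fun x => φ x^2 * ‖v.1 x‖^2) volume := by
    apply Integrable.mono' (is1.const_mul (Bφ^2))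
      (((cφ.pow 2).mul (cv1.norm.pow 2)).aestronglyMeasurable)
    filter_upwards with x
    simp only [Pi.pow_apply, Pi.mul_apply]
    rw [Real.norm_eq_abs, abs_of_nonneg (by positivity)]
    nlinarith [hφBsq x, sq_nonneg ‖v.1 x‖]
  have iQ2b : Integrable (fun x => φ x^2 * (v.1 x).re^2) volume := by
    apply Integrable.mono' (is1.const_mul (Bφ^2))
      (((cφ.pow 2).mul (cr1.pow 2)).aestronglyMeasurable)
    filter_upwards with x
    simp only [Pi.pow_apply, Pi.mul_apply]
    rw [Real.norm_eq_abs, abs_of_nonneg (by positivity)]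
    nlinarith [hφBsq x, re_sq_le_norm_sq (v.1 x), sq_nonneg (φ x), sq_nonneg ((v.1 x).re),
      sq_nonneg ‖v.1 x‖]
  have iQ3 : Integrable (fun x => φ x * (v.1 x).re * ‖v.1 x‖^2) volume := by
    apply Integrable.mono' (is1.const_mul (Bφ*D₁))
      (((cφ.mul cr1).mul (cv1.norm.pow 2)).aestronglyMeasurable)
    filter_upwards with x
    simp only [Pi.pow_apply, Pi.mul_apply]
    rw [Real.norm_eq_abs, abs_mul, abs_mul, abs_of_nonneg (sq_nonneg ‖v.1 x‖)]
    have h1 : |(v.1 x).re| ≤ D₁ := (Complex.abs_re_le_norm _).trans (hD₁ x)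
    have h2 : (0:ℝ) ≤ ‖v.1 x‖^2 := sq_nonneg _
    calc |φ x| * |(v.1 x).re| * ‖v.1 x‖^2 ≤ Bφ * D₁ * ‖v.1 x‖^2 := by
          apply mul_le_mul_of_nonneg_right _ h2
          exact mul_le_mul (hBφ x) h1 (abs_nonneg _) hBφ0
      _ = Bφ * D₁ * ‖v.1 x‖^2 := rfl
  have iQ4 : Integrable (fun x => ‖v.1 x‖^4) volume := by
    apply Integrable.mono' (is1.const_mul (D₁^2)) ((cv1.norm.pow 4).aestronglyMeasurable)
    filter_upwards with x
    simp only [Pi.pow_apply, Pi.mul_apply]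
    rw [Real.norm_eq_abs, abs_of_nonneg (by positivity)]
    nlinarith [pow_le_pow_left₀ (norm_nonneg (v.1 x)) (hD₁ x) 2, sq_nonneg ‖v.1 x‖]
  have iQ4' : Integrable (fun x => ‖v.2 x‖^4) volume := by
    apply Integrable.mono' (is2.const_mul (D₂^2)) ((cv2.norm.pow 4).aestronglyMeasurable)
    filter_upwards with x
    simp only [Pi.pow_apply, Pi.mul_apply]
    rw [Real.norm_eq_abs, abs_of_nonneg (by positivity)]
    nlinarith [pow_le_pow_left₀ (norm_nonneg (v.2 x)) (hD₂ x) 2, sq_nonneg ‖v.2 x‖]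
  -- phiW-based atoms
  have hpsq : ∀ x, (phiW ω x)^2 ≤ 2*ω := by
    intro x
    have := phiW_abs_le hω x
    nlinarith [abs_nonneg (phiW ω x), sq_abs (phiW ω x), Real.sq_sqrt (by linarith : (0:ℝ) ≤ 2*ω),
      Real.sqrt_nonneg (2*ω)]
  have ipatom : ∀ (g : ℝ → ℝ), Continuous g → Integrable (fun x => g x^2) volume →
      Integrable (fun x => (phiW ω x)^2 * g x^2) volume := by
    intro g cg ig
    apply Integrable.mono' (ig.const_mul (2*ω))
      ((((phiW_cont ω).pow 2).mul (cg.pow 2)).aestronglyMeasurable)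
    filter_upwards with x
    simp only [Pi.pow_apply, Pi.mul_apply]
    rw [Real.norm_eq_abs, abs_of_nonneg (by positivity)]
    nlinarith [hpsq x, sq_nonneg (g x), sq_nonneg (phiW ω x)]
  have ipr1 := ipatom _ cr1 ir1
  have ipi1 := ipatom _ ci1 ii1
  have ipr2 := ipatom _ cr2 ir2
  have ipi2 := ipatom _ ci2 ii2
  -- complex coupling integrands
  set W0 : ℝ → ℂ := fun x => ((φ x : ℝ) : ℂ)^2 * ((starRingEnd ℂ) (v.2 x))^2 with hW0
  set W1 : ℝ → ℂ := fun x => ((φ x : ℝ) : ℂ) * v.1 x * ((starRingEnd ℂ) (v.2 x))^2 with hW1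
  set W2 : ℝ → ℂ := fun x => (v.1 x)^2 * ((starRingEnd ℂ) (v.2 x))^2 with hW2
  have cconj2 : Continuous (fun x => ((starRingEnd ℂ) (v.2 x))^2) :=
    (RCLike.continuous_conj.comp cv2).pow 2
  have hnconj : ∀ z : ℂ, ‖((starRingEnd ℂ) z)^2‖ = ‖z‖^2 := fun z => by
    rw [norm_pow, RCLike.norm_conj]
  have mW0 : AEStronglyMeasurable W0 volume :=
    ((((Complex.continuous_ofReal.comp cφ)).pow 2).mul cconj2).aestronglyMeasurable
  have mW1 : AEStronglyMeasurable W1 volume :=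
    (((Complex.continuous_ofReal.comp cφ).mul cv1).mul cconj2).aestronglyMeasurable
  have mW2 : AEStronglyMeasurable W2 volume :=
    ((cv1.pow 2).mul cconj2).aestronglyMeasurable
  have iW0 : Integrable W0 volume := by
    apply Integrable.mono' (is2.const_mul (Bφ^2)) mW0
    filter_upwards with x
    simp only [hW0]
    rw [norm_mul, norm_pow, Complex.norm_real, hnconj, Real.norm_eq_abs]
    exact mul_le_mul_of_nonneg_right (pow_le_pow_left₀ (abs_nonneg _) (hBφ x) 2) (sq_nonneg _)
  have iW1 : Integrable W1 volume := by
    apply Integrable.mono' (is2.const_mul (Bφ*D₁)) mW1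
    filter_upwards with x
    simp only [hW1]
    rw [norm_mul, norm_mul, Complex.norm_real, hnconj, Real.norm_eq_abs]
    have h2 : (0:ℝ) ≤ ‖v.2 x‖^2 := sq_nonneg _
    apply mul_le_mul_of_nonneg_right _ h2
    exact mul_le_mul (hBφ x) (hD₁ x) (norm_nonneg _) hBφ0
  have iW2 : Integrable W2 volume := by
    apply Integrable.mono' (is2.const_mul (D₁^2)) mW2
    filter_upwards with x
    simp only [hW2]
    rw [norm_mul, norm_pow, hnconj]
    have h2 : (0:ℝ) ≤ ‖v.2 x‖^2 := sq_nonneg _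
    apply mul_le_mul_of_nonneg_right _ h2
    exact pow_le_pow_left₀ (norm_nonneg _) (hD₁ x) 2
  -- pointwise description of the perturbed pair
  have hU1p : ∀ (t : ℝ) x, (phivec κ₁ ω + t • v).1 x = ((φ x : ℝ) : ℂ) + t • v.1 x :=
    fun t x => rfl
  have hU2p : ∀ (t : ℝ) x, (phivec κ₁ ω + t • v).2 x = t • v.2 x := fun t x => zero_add _
  have hdd1 : ∀ (t : ℝ) x, deriv ((phivec κ₁ ω + t • v).1) x
      = ((φ' x : ℝ) : ℂ) + t • deriv v.1 x := by
    intro t x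
    have h2 : HasDerivAt ((phivec κ₁ ω + t • v).1) (((φ' x : ℝ) : ℂ) + t • deriv v.1 x) x :=
      (Complex.ofRealCLM.hasFDerivAt.comp_hasDerivAt x (hφd x)).add
        ((hv1.1 x).hasDerivAt.const_smul t)
    exact h2.deriv
  have hdd2 : ∀ (t : ℝ) x, deriv ((phivec κ₁ ω + t • v).2) x = t • deriv v.2 x := by
    intro t x
    have h2 : HasDerivAt ((phivec κ₁ ω + t • v).2) ((0:ℂ) + t • deriv v.2 x) x :=
      (hasDerivAt_const x (0:ℂ)).add ((hv2.1 x).hasDerivAt.const_smul t)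
    rw [h2.deriv, zero_add]
  -- expansions of the integrals
  have e1 : ∀ t : ℝ, (∫ x : ℝ, ‖deriv (phivec κ₁ ω + t • v).1 x‖^2)
      = (∫ x, φ' x^2) + t*(∫ x, 2*(φ' x * (deriv v.1 x).re))
        + t^2*(∫ x, ‖deriv v.1 x‖^2) := by
    intro t
    rw [integral_congr_ae (Filter.Eventually.of_forall (fun x => by
      beta_reduce
      rw [hdd1 t x, norm_sq_add_smul]
      try ring) : (fun x => ‖deriv (phivec κ₁ ω + t • v).1 x‖^2) =ᵐ[volume]
        (fun x => φ' x^2 + t*(2*(φ' x * (deriv v.1 x).re)) + t^2*‖deriv v.1 x‖^2))]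
    exact integral_poly2 iφ'2 (iK1.const_mul 2) ids1 t (t^2)
  have e2 : ∀ t : ℝ, (∫ x : ℝ, ‖(phivec κ₁ ω + t • v).1 x‖^4)
      = (∫ x, φ x^4) + t*(∫ x, 4*(φ x^3*(v.1 x).re))
        + t^2*(∫ x, (2*(φ x^2*‖v.1 x‖^2) + 4*(φ x^2*(v.1 x).re^2)))
        + t^3*(∫ x, 4*(φ x*(v.1 x).re*‖v.1 x‖^2)) + t^4*(∫ x, ‖v.1 x‖^4) := by
    intro t
    rw [integral_congr_ae (Filter.Eventually.of_forall (fun x => by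
      beta_reduce
      rw [hU1p t x, norm_pow4_add_smul]
      ring) : (fun x => ‖(phivec κ₁ ω + t • v).1 x‖^4) =ᵐ[volume]
        (fun x => φ x^4 + t*(4*(φ x^3*(v.1 x).re))
          + t^2*(2*(φ x^2*‖v.1 x‖^2) + 4*(φ x^2*(v.1 x).re^2))
          + t^3*(4*(φ x*(v.1 x).re*‖v.1 x‖^2)) + t^4*(‖v.1 x‖^4)))]
    exact integral_poly4 iφ4 (iQ1.const_mul 4) ((iQ2a.const_mul 2).add (iQ2b.const_mul 4))
      (iQ3.const_mul 4) iQ4 t (t^2) (t^3) (t^4)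
  have e3 : ∀ t : ℝ, (∫ x : ℝ, ‖deriv (phivec κ₁ ω + t • v).2 x‖^2)
      = t^2*(∫ x, ‖deriv v.2 x‖^2) := by
    intro t
    rw [integral_congr_ae (Filter.Eventually.of_forall (fun x => by
      beta_reduce
      rw [hdd2 t x, norm_smul_sq]) : (fun x => ‖deriv (phivec κ₁ ω + t • v).2 x‖^2)
        =ᵐ[volume] (fun x => t^2 * ‖deriv v.2 x‖^2))]
    exact integral_const_mul _ _
  have e4 : ∀ t : ℝ, (∫ x : ℝ, ‖(phivec κ₁ ω + t • v).2 x‖^4) = t^4*(∫ x, ‖v.2 x‖^4) := by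
    intro t
    rw [integral_congr_ae (Filter.Eventually.of_forall (fun x => by
      beta_reduce
      rw [hU2p t x, norm_smul_pow4]) : (fun x => ‖(phivec κ₁ ω + t • v).2 x‖^4)
        =ᵐ[volume] (fun x => t^4 * ‖v.2 x‖^4))]
    exact integral_const_mul _ _
  have e5 : ∀ t : ℝ, (∫ x : ℝ, ((phivec κ₁ ω + t • v).1 x)^2
        * ((starRingEnd ℂ) ((phivec κ₁ ω + t • v).2 x))^2).re
      = t^2 * (∫ x, W0 x).re + (2*t^3) * (∫ x, W1 x).re + t^4 * (∫ x, W2 x).re := by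
    intro t
    have hpt : ∀ x, ((phivec κ₁ ω + t • v).1 x)^2
        * ((starRingEnd ℂ) ((phivec κ₁ ω + t • v).2 x))^2
        = ((t^2 : ℝ) : ℂ) * W0 x + (((2*t^3) : ℝ) : ℂ) * W1 x + ((t^4 : ℝ) : ℂ) * W2 x := by
      intro x
      rw [hU1p t x, hU2p t x]
      simp only [hW0, hW1, hW2, Complex.real_smul, map_mul, map_pow, Complex.conj_ofReal]
      push_cast
      ring
    rw [integral_congr_ae (Filter.Eventually.of_forall hpt)]
    have hI1 : Integrable (fun x => ((t^2 : ℝ) : ℂ) * W0 x + (((2*t^3) : ℝ) : ℂ) * W1 x)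
        volume := (iW0.const_mul _).add (iW1.const_mul _)
    rw [integral_add hI1 (iW2.const_mul _), integral_add (iW0.const_mul _) (iW1.const_mul _),
      integral_const_mul, integral_const_mul, integral_const_mul]
    simp only [Complex.add_re, Complex.re_ofReal_mul]
    try ring
  have e6 : ∀ t : ℝ, (∫ x : ℝ, ‖(phivec κ₁ ω + t • v).1 x‖^2)
      = (∫ x, φ x^2) + t*(∫ x, 2*(φ x*(v.1 x).re)) + t^2*(∫ x, ‖v.1 x‖^2) := by
    intro t
    rw [integral_congr_ae (Filter.Eventually.of_forall (fun x => by
      beta_reduce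
      rw [hU1p t x, norm_sq_add_smul]
      try ring) : (fun x => ‖(phivec κ₁ ω + t • v).1 x‖^2) =ᵐ[volume]
        (fun x => φ x^2 + t*(2*(φ x*(v.1 x).re)) + t^2*‖v.1 x‖^2))]
    exact integral_poly2 iφ2 (iφr1.const_mul 2) is1 t (t^2)
  have e7 : ∀ t : ℝ, (∫ x : ℝ, ‖(phivec κ₁ ω + t • v).2 x‖^2) = t^2*(∫ x, ‖v.2 x‖^2) := by
    intro t
    rw [integral_congr_ae (Filter.Eventually.of_forall (fun x => by
      beta_reduce
      rw [hU2p t x, norm_smul_sq]) : (fun x => ‖(phivec κ₁ ω + t • v).2 x‖^2)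
        =ᵐ[volume] (fun x => t^2 * ‖v.2 x‖^2))]
    exact integral_const_mul _ _
  -- polynomial form of the action along the segment
  have hF : (fun t : ℝ => Sfun κ₁ κ₂ γ ω (phivec κ₁ ω + t • v))
      = fun t : ℝ =>
        ((1/2)*(∫ x, φ' x^2) - (κ₁/4)*(∫ x, φ x^4) + ω*((1/2)*(∫ x, φ x^2)))
        + ((1/2)*(∫ x, 2*(φ' x * (deriv v.1 x).re)) - (κ₁/4)*(∫ x, 4*(φ x^3*(v.1 x).re))
            + ω*((1/2)*(∫ x, 2*(φ x*(v.1 x).re))))*t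
        + ((1/2)*(∫ x, ‖deriv v.1 x‖^2)
            - (κ₁/4)*(∫ x, (2*(φ x^2*‖v.1 x‖^2) + 4*(φ x^2*(v.1 x).re^2)))
            + (1/2)*(∫ x, ‖deriv v.2 x‖^2) - (γ/2)*(∫ x, W0 x).re
            + ω*((1/2)*((∫ x, ‖v.1 x‖^2) + (∫ x, ‖v.2 x‖^2))))*t^2
        + (-(κ₁/4)*(∫ x, 4*(φ x*(v.1 x).re*‖v.1 x‖^2)) - (γ/2)*(2*(∫ x, W1 x).re))*t^3
        + (-(κ₁/4)*(∫ x, ‖v.1 x‖^4) - (κ₂/4)*(∫ x, ‖v.2 x‖^4)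
            - (γ/2)*(∫ x, W2 x).re)*t^4 := by
    funext t
    simp only [Sfun, En, Qm]
    rw [e1 t, e2 t, e3 t, e4 t, e5 t, e6 t, e7 t]
    ring
  rw [hF, iteratedDeriv_two_poly]
  -- identify the quadratic forms
  have hdR1 : ∀ x, deriv (fun y => (v.1 y).re) x = (deriv v.1 x).re := fun x =>
    (Complex.reCLM.hasFDerivAt.comp_hasDerivAt x (hv1.1 x).hasDerivAt).deriv
  have hdI1 : ∀ x, deriv (fun y => (v.1 y).im) x = (deriv v.1 x).im := fun x =>
    (Complex.imCLM.hasFDerivAt.comp_hasDerivAt x (hv1.1 x).hasDerivAt).deriv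
  have hdR2 : ∀ x, deriv (fun y => (v.2 y).re) x = (deriv v.2 x).re := fun x =>
    (Complex.reCLM.hasFDerivAt.comp_hasDerivAt x (hv2.1 x).hasDerivAt).deriv
  have hdI2 : ∀ x, deriv (fun y => (v.2 y).im) x = (deriv v.2 x).im := fun x =>
    (Complex.imCLM.hasFDerivAt.comp_hasDerivAt x (hv2.1 x).hasDerivAt).deriv
  have hq1 : QLa ω 3 (fun x => (v.1 x).re)
      = (∫ x, (deriv v.1 x).re^2) + ω*(∫ x, (v.1 x).re^2)
        - 3*(∫ x, (phiW ω x)^2*(v.1 x).re^2) := by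
    rw [QLa]
    rw [integral_congr_ae (Filter.Eventually.of_forall (fun x => by
      beta_reduce
      rw [hdR1 x]
      ring) : _ =ᵐ[volume] (fun x => (deriv v.1 x).re^2 + ω*(v.1 x).re^2
        - 3*((phiW ω x)^2*(v.1 x).re^2)))]
    exact integral_comb3 idr1 ir1 ipr1 ω 3
  have hq2 : QLa ω 1 (fun x => (v.1 x).im)
      = (∫ x, (deriv v.1 x).im^2) + ω*(∫ x, (v.1 x).im^2)
        - 1*(∫ x, (phiW ω x)^2*(v.1 x).im^2) := by
    rw [QLa]
    rw [integral_congr_ae (Filter.Eventually.of_forall (fun x => by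
      beta_reduce
      rw [hdI1 x]
      ring) : _ =ᵐ[volume] (fun x => (deriv v.1 x).im^2 + ω*(v.1 x).im^2
        - 1*((phiW ω x)^2*(v.1 x).im^2)))]
    exact integral_comb3 idi1 ii1 ipi1 ω 1
  have hq3 : QLa ω (γ/κ₁) (fun x => (v.2 x).re)
      = (∫ x, (deriv v.2 x).re^2) + ω*(∫ x, (v.2 x).re^2)
        - (γ/κ₁)*(∫ x, (phiW ω x)^2*(v.2 x).re^2) := by
    rw [QLa]
    rw [integral_congr_ae (Filter.Eventually.of_forall (fun x => by
      beta_reduce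
      rw [hdR2 x]
      ring) : _ =ᵐ[volume] (fun x => (deriv v.2 x).re^2 + ω*(v.2 x).re^2
        - (γ/κ₁)*((phiW ω x)^2*(v.2 x).re^2)))]
    exact integral_comb3 idr2 ir2 ipr2 ω (γ/κ₁)
  have hq4 : QLa ω (-(γ/κ₁)) (fun x => (v.2 x).im)
      = (∫ x, (deriv v.2 x).im^2) + ω*(∫ x, (v.2 x).im^2)
        - (-(γ/κ₁))*(∫ x, (phiW ω x)^2*(v.2 x).im^2) := by
    rw [QLa]
    rw [integral_congr_ae (Filter.Eventually.of_forall (fun x => by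
      beta_reduce
      rw [hdI2 x]
      ring) : _ =ᵐ[volume] (fun x => (deriv v.2 x).im^2 + ω*(v.2 x).im^2
        - (-(γ/κ₁))*((phiW ω x)^2*(v.2 x).im^2)))]
    exact integral_comb3 idi2 ii2 ipi2 ω (-(γ/κ₁))
  -- split the norms into real and imaginary parts
  have hsplit1 : (∫ x, ‖deriv v.1 x‖^2)
      = (∫ x, (deriv v.1 x).re^2) + (∫ x, (deriv v.1 x).im^2) := by
    rw [← integral_add idr1 idi1]
    exact integral_congr_ae (Filter.Eventually.of_forall fun x => normsq_eq _)
  have hsplit2 : (∫ x, ‖deriv v.2 x‖^2)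
      = (∫ x, (deriv v.2 x).re^2) + (∫ x, (deriv v.2 x).im^2) := by
    rw [← integral_add idr2 idi2]
    exact integral_congr_ae (Filter.Eventually.of_forall fun x => normsq_eq _)
  have hsplitv1 : (∫ x, ‖v.1 x‖^2) = (∫ x, (v.1 x).re^2) + (∫ x, (v.1 x).im^2) := by
    rw [← integral_add ir1 ii1]
    exact integral_congr_ae (Filter.Eventually.of_forall fun x => normsq_eq _)
  have hsplitv2 : (∫ x, ‖v.2 x‖^2) = (∫ x, (v.2 x).re^2) + (∫ x, (v.2 x).im^2) := by
    rw [← integral_add ir2 ii2]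
    exact integral_congr_ae (Filter.Eventually.of_forall fun x => normsq_eq _)
  have hqC : (∫ x, (2*(φ x^2*‖v.1 x‖^2) + 4*(φ x^2*(v.1 x).re^2)))
      = 2*(∫ x, φ x^2*‖v.1 x‖^2) + 4*(∫ x, φ x^2*(v.1 x).re^2) := by
    rw [integral_add (iQ2a.const_mul 2) (iQ2b.const_mul 4), integral_const_mul,
      integral_const_mul]
  have hsφ2a : (∫ x, φ x^2*‖v.1 x‖^2)
      = (1/κ₁)*((∫ x, (phiW ω x)^2*(v.1 x).re^2) + (∫ x, (phiW ω x)^2*(v.1 x).im^2)) := by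
    rw [← integral_add ipr1 ipi1, ← integral_const_mul]
    exact integral_congr_ae (Filter.Eventually.of_forall fun x => by
      beta_reduce
      rw [hφsq x, normsq_eq]
      field_simp)
  have hsφ2b : (∫ x, φ x^2*(v.1 x).re^2) = (1/κ₁)*(∫ x, (phiW ω x)^2*(v.1 x).re^2) := by
    rw [← integral_const_mul]
    exact integral_congr_ae (Filter.Eventually.of_forall fun x => by
      beta_reduce
      rw [hφsq x]
      field_simp)
  have hW0re : (∫ x, W0 x).re
      = (1/κ₁)*((∫ x, (phiW ω x)^2*(v.2 x).re^2) - (∫ x, (phiW ω x)^2*(v.2 x).im^2)) := by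
    have h : (∫ x, W0 x).re = ∫ x, (W0 x).re := (Complex.reCLM.integral_comp_comm iW0).symm
    rw [h, ← integral_sub ipr2 ipi2, ← integral_const_mul]
    exact integral_congr_ae (Filter.Eventually.of_forall fun x => by
      beta_reduce
      simp only [hW0]
      rw [re_ofReal_sq_mul_conj_sq, hφsq x]
      field_simp)
  rw [hq1, hq2, hq3, hq4, hqC, hsφ2a, hsφ2b, hW0re, hsplit1, hsplit2, hsplitv1, hsplitv2]
  field_simp
  ring
end

section
/- In the degenerate case γ = κ₁, for all λ ∈ ℝ: S_ω(⃗φ_ω + λ⃗ψ_ω) = S_ω(⃗φ_ω) + (ν₁/24)λ⁴ exactly, and ⟨S_ω'(⃗φ_ω + λ⃗ψ_ω), ⃗ψ_ω⟩ = (ν₁/6)λ³, where ν₁ = −(6κ₂/κ₁²)‖φ_ω‖⁴_{L⁴}. -/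
open MeasureTheory Real Asymptotics

section AuxLemmas
open Filter


lemma my_hasDerivAt_tanh (x : ℝ) : HasDerivAt Real.tanh ((Real.cosh x ^ 2)⁻¹) x := by
  have h := (Real.hasDerivAt_sinh x).div (Real.hasDerivAt_cosh x) (Real.cosh_pos x).ne'
  have e : Real.tanh = fun y => Real.sinh y / Real.cosh y :=
    funext fun y => Real.tanh_eq_sinh_div_cosh y
  rw [e]
  refine h.congr_deriv ?_
  have h1 := Real.cosh_sq_sub_sinh_sq x
  have h2 := (Real.cosh_pos x).ne'
  field_simp
  nlinarith

lemma my_tanh_eq (x : ℝ) :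
    Real.tanh x = (1 - Real.exp (-(2*x))) / (1 + Real.exp (-(2*x))) := by
  rw [Real.tanh_eq_sinh_div_cosh, Real.sinh_eq, Real.cosh_eq]
  have h1 : Real.exp (-(2*x)) = Real.exp (-x) * Real.exp (-x) := by
    rw [← Real.exp_add]; ring_nf
  have h2 : Real.exp x * Real.exp (-x) = 1 := by rw [← Real.exp_add]; simp
  have h3 : (0:ℝ) < Real.exp x + Real.exp (-x) := by positivity
  have h4 : (0:ℝ) < 1 + Real.exp (-(2*x)) := by positivity
  field_simp
  rw [show x * 2 = 2 * x by ring, h1]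
  linear_combination (2 * Real.exp (-x)) * h2

lemma my_tendsto_tanh_atTop : Tendsto Real.tanh atTop (nhds 1) := by
  have hexp : Tendsto (fun x : ℝ => Real.exp (-(2*x))) atTop (nhds 0) := by
    apply Real.tendsto_exp_atBot.comp
    exact ((tendsto_const_mul_atBot_of_neg (show (-2:ℝ) < 0 by norm_num)).mpr tendsto_id).congr
      fun x => by simp [id]
  have h : Tendsto (fun x : ℝ => (1 - Real.exp (-(2*x))) / (1 + Real.exp (-(2*x)))) atTop
      (nhds ((1-0)/(1+0))) :=
    (tendsto_const_nhds.sub hexp).div (tendsto_const_nhds.add hexp) (by norm_num)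
  norm_num at h
  exact h.congr fun x => (my_tanh_eq x).symm

lemma my_tendsto_tanh_atBot : Tendsto Real.tanh atBot (nhds (-1)) := by
  have h := (my_tendsto_tanh_atTop.comp tendsto_neg_atBot_atTop).neg
  simp only [Function.comp_def] at h
  exact h.congr fun x => by rw [← Real.tanh_neg, neg_neg]

lemma my_integrable_even {F g : ℝ → ℝ} (hF : ∀ x, HasDerivAt F (g x) x)
    (hg0 : ∀ x, 0 ≤ g x) (hge : ∀ x, g (-x) = g x) {l : ℝ}
    (hl : Tendsto F atTop (nhds l)) : Integrable g := by
  have hIoi : IntegrableOn g (Set.Ioi 0) volume :=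
    integrableOn_Ioi_deriv_of_nonneg' (fun x _ => hF x) (fun x _ => hg0 x) hl
  have hIci : IntegrableOn g (Set.Ici 0) volume :=
    Iff.mpr integrableOn_Ici_iff_integrableOn_Ioi hIoi
  have hIic : IntegrableOn g (Set.Iic 0) volume := by
    rw [IntegrableOn, ← Measure.map_neg_eq_self (volume : Measure ℝ)]
    have m : MeasurableEmbedding (Neg.neg : ℝ → ℝ) :=
      (Homeomorph.neg ℝ).measurableEmbedding
    rw [m.restrict_map, m.integrable_map_iff]
    have e1 : (g ∘ (Neg.neg : ℝ → ℝ)) = g := funext fun x => hge x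
    have e2 : (Neg.neg : ℝ → ℝ) ⁻¹' Set.Iic 0 = Set.Ici 0 := by
      ext y; simp
    rw [e1, e2]
    exact hIci
  rw [← integrableOn_univ, ← Set.Iic_union_Ioi (a := (0:ℝ))]
  exact hIic.union hIoi

lemma my_lin_top {c : ℝ} (hc : 0 < c) : Tendsto (fun y : ℝ => c * y) atTop atTop :=
  (tendsto_const_mul_atTop_of_pos hc).mpr tendsto_id

lemma my_lin_bot {c : ℝ} (hc : 0 < c) : Tendsto (fun y : ℝ => c * y) atBot atBot :=
  (tendsto_const_mul_atBot_of_pos hc).mpr tendsto_id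

lemma my_hd_tanh_comp {c : ℝ} (x : ℝ) :
    HasDerivAt (fun y : ℝ => Real.tanh (c*y)) ((Real.cosh (c*x) ^ 2)⁻¹ * c) x := by
  have h1 : HasDerivAt (fun y : ℝ => c*y) c x := by
    simpa using (hasDerivAt_id x).const_mul c
  exact (my_hasDerivAt_tanh (c*x)).comp x h1

lemma int_sech_sq {c : ℝ} (hc : 0 < c) :
    Integrable (fun x : ℝ => (1 / Real.cosh (c*x))^2) ∧
    ∫ x : ℝ, (1 / Real.cosh (c*x))^2 = 2/c := by
  have hF : ∀ x : ℝ, HasDerivAt (fun y : ℝ => Real.tanh (c*y) / c)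
      ((1 / Real.cosh (c*x))^2) x := by
    intro x
    have h := (my_hd_tanh_comp (c := c) x).div_const c
    refine h.congr_deriv ?_
    field_simp
  have hg0 : ∀ x : ℝ, 0 ≤ (1 / Real.cosh (c*x))^2 := fun x => sq_nonneg _
  have hge : ∀ x : ℝ, (1 / Real.cosh (c*(-x)))^2 = (1 / Real.cosh (c*x))^2 := by
    intro x; rw [mul_neg, Real.cosh_neg]
  have htop : Tendsto (fun y : ℝ => Real.tanh (c*y) / c) atTop (nhds (1/c)) :=
    (my_tendsto_tanh_atTop.comp (my_lin_top hc)).div_const c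
  have hbot : Tendsto (fun y : ℝ => Real.tanh (c*y) / c) atBot (nhds (-1/c)) :=
    (my_tendsto_tanh_atBot.comp (my_lin_bot hc)).div_const c
  have hint := my_integrable_even hF hg0 hge htop
  refine ⟨hint, ?_⟩
  rw [MeasureTheory.integral_of_hasDerivAt_of_tendsto hF hint hbot htop]
  ring

lemma int_tanh_sq_sech_sq {c : ℝ} (hc : 0 < c) :
    Integrable (fun x : ℝ => Real.tanh (c*x)^2 * (1 / Real.cosh (c*x))^2) ∧
    ∫ x : ℝ, Real.tanh (c*x)^2 * (1 / Real.cosh (c*x))^2 = 2/(3*c) := by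
  have hF : ∀ x : ℝ, HasDerivAt (fun y : ℝ => Real.tanh (c*y)^3 / (3*c))
      (Real.tanh (c*x)^2 * (1 / Real.cosh (c*x))^2) x := by
    intro x
    have h := ((my_hd_tanh_comp (c := c) x).pow 3).div_const (3*c)
    refine h.congr_deriv ?_
    have h2 := (Real.cosh_pos (c*x)).ne'
    field_simp
    ring
  have hg0 : ∀ x : ℝ, 0 ≤ Real.tanh (c*x)^2 * (1 / Real.cosh (c*x))^2 :=
    fun x => by positivity
  have hge : ∀ x : ℝ,
      Real.tanh (c*(-x))^2 * (1 / Real.cosh (c*(-x)))^2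
        = Real.tanh (c*x)^2 * (1 / Real.cosh (c*x))^2 := by
    intro x; rw [mul_neg, Real.cosh_neg, Real.tanh_neg, neg_pow]
    ring
  have htop : Tendsto (fun y : ℝ => Real.tanh (c*y)^3 / (3*c)) atTop
      (nhds ((1:ℝ)^3/(3*c))) :=
    ((my_tendsto_tanh_atTop.comp (my_lin_top hc)).pow 3).div_const (3*c)
  have hbot : Tendsto (fun y : ℝ => Real.tanh (c*y)^3 / (3*c)) atBot
      (nhds ((-1:ℝ)^3/(3*c))) :=
    ((my_tendsto_tanh_atBot.comp (my_lin_bot hc)).pow 3).div_const (3*c)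
  have hint := my_integrable_even hF hg0 hge htop
  refine ⟨hint, ?_⟩
  rw [MeasureTheory.integral_of_hasDerivAt_of_tendsto hF hint hbot htop]
  ring

lemma int_sech_four {c : ℝ} (hc : 0 < c) :
    Integrable (fun x : ℝ => (1 / Real.cosh (c*x))^4) ∧
    ∫ x : ℝ, (1 / Real.cosh (c*x))^4 = 4/(3*c) := by
  obtain ⟨i1, v1⟩ := int_sech_sq hc
  obtain ⟨i2, v2⟩ := int_tanh_sq_sech_sq hc
  have e : (fun x : ℝ => (1 / Real.cosh (c*x))^4)
      = fun x => (1 / Real.cosh (c*x))^2 - Real.tanh (c*x)^2 * (1 / Real.cosh (c*x))^2 := by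
    funext x
    have h1 := Real.cosh_sq_sub_sinh_sq (c*x)
    have h2 := (Real.cosh_pos (c*x)).ne'
    rw [Real.tanh_eq_sinh_div_cosh]
    field_simp
    nlinarith [Real.cosh_pos (c*x)]
  constructor
  · rw [e]; exact i1.sub i2
  · rw [e, integral_sub i1 i2, v1, v2]; ring

noncomputable def phiD (ω x : ℝ) : ℝ :=
  -(Real.sqrt (2 * ω) * (Real.sqrt ω * Real.sinh (Real.sqrt ω * x)
      / (Real.cosh (Real.sqrt ω * x))^2))

lemma phiW_hasDeriv (ω : ℝ) (x : ℝ) : HasDerivAt (phiW ω) (phiD ω x) x := by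
  have h1 : HasDerivAt (fun y : ℝ => Real.sqrt ω * y) (Real.sqrt ω) x := by
    simpa using (hasDerivAt_id x).const_mul (Real.sqrt ω)
  have h2 : HasDerivAt (fun y : ℝ => Real.cosh (Real.sqrt ω * y))
      (Real.sinh (Real.sqrt ω * x) * Real.sqrt ω) x :=
    (Real.hasDerivAt_cosh (Real.sqrt ω * x)).comp x h1
  have h3 := h2.inv (Real.cosh_pos (Real.sqrt ω * x)).ne'
  have h4 := h3.const_mul (Real.sqrt (2*ω))
  have e : phiW ω = fun y => Real.sqrt (2*ω) * (fun y : ℝ => Real.cosh (Real.sqrt ω * y))⁻¹ y := by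
    funext y; simp only [phiW, one_div, Pi.inv_apply]
  rw [e]; refine h4.congr_deriv ?_
  unfold phiD; ring




lemma int_phiW_sq {ω : ℝ} (hω : 0 < ω) :
    ∫ x : ℝ, (phiW ω x)^2 = 4 * ω / Real.sqrt ω := by
  have hc : 0 < Real.sqrt ω := Real.sqrt_pos.mpr hω
  obtain ⟨i1, v1⟩ := int_sech_sq hc
  have e : (fun x : ℝ => (phiW ω x)^2)
      = fun x => 2*ω * (1 / Real.cosh (Real.sqrt ω * x))^2 := by
    funext x; unfold phiW
    rw [mul_pow, Real.sq_sqrt (by linarith : (0:ℝ) ≤ 2*ω)]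
  rw [e, MeasureTheory.integral_const_mul, v1]
  field_simp
  ring

lemma int_phiW_four {ω : ℝ} (hω : 0 < ω) :
    ∫ x : ℝ, (phiW ω x)^4 = 16 * ω^2 / (3 * Real.sqrt ω) := by
  have hc : 0 < Real.sqrt ω := Real.sqrt_pos.mpr hω
  obtain ⟨i1, v1⟩ := int_sech_four hc
  have e : (fun x : ℝ => (phiW ω x)^4)
      = fun x => 4*ω^2 * (1 / Real.cosh (Real.sqrt ω * x))^4 := by
    funext x; unfold phiW
    rw [mul_pow]
    have : Real.sqrt (2*ω)^4 = (Real.sqrt (2*ω)^2)^2 := by ring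
    rw [this, Real.sq_sqrt (by linarith : (0:ℝ) ≤ 2*ω)]
    ring
  rw [e, MeasureTheory.integral_const_mul, v1]
  field_simp
  ring

lemma int_phiD_sq {ω : ℝ} (hω : 0 < ω) :
    ∫ x : ℝ, (phiD ω x)^2 = 4 * ω^2 / (3 * Real.sqrt ω) := by
  have hc : 0 < Real.sqrt ω := Real.sqrt_pos.mpr hω
  obtain ⟨i1, v1⟩ := int_tanh_sq_sech_sq hc
  have e : (fun x : ℝ => (phiD ω x)^2)
      = fun x => 2*ω^2 * (Real.tanh (Real.sqrt ω * x)^2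
          * (1 / Real.cosh (Real.sqrt ω * x))^2) := by
    funext x; unfold phiD
    have h2 := (Real.cosh_pos (Real.sqrt ω * x)).ne'
    rw [Real.tanh_eq_sinh_div_cosh]
    have e1 : (-(Real.sqrt (2*ω) * (Real.sqrt ω * Real.sinh (Real.sqrt ω * x)
        / (Real.cosh (Real.sqrt ω * x))^2)))^2
        = Real.sqrt (2*ω)^2 * (Real.sqrt ω^2
            * (Real.sinh (Real.sqrt ω * x)^2 / ((Real.cosh (Real.sqrt ω * x))^2)^2)) := by
      ring
    rw [e1, Real.sq_sqrt (by linarith : (0:ℝ) ≤ 2*ω), Real.sq_sqrt hω.le]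
    field_simp
  rw [e, MeasureTheory.integral_const_mul, v1]
  field_simp
  ring

lemma phi_combo {ω : ℝ} (hω : 0 < ω) :
    (∫ x : ℝ, (phiD ω x)^2) + ω * (∫ x : ℝ, (phiW ω x)^2)
      - ∫ x : ℝ, (phiW ω x)^4 = 0 := by
  have hc : 0 < Real.sqrt ω := Real.sqrt_pos.mpr hω
  rw [int_phiD_sq hω, int_phiW_sq hω, int_phiW_four hω]
  have hss : Real.sqrt ω * Real.sqrt ω = ω := Real.mul_self_sqrt hω.le
  field_simp
  nlinarith [hss]

lemma habs4 (r : ℝ) : |r|^4 = r^4 := by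
  rw [show (4:ℕ) = 2*2 from rfl, pow_mul, sq_abs, ← pow_mul]

lemma Sfun_expand (κ₁ κ₂ ω : ℝ) (hκ₁ : 0 < κ₁) (t : ℝ) :
    Sfun κ₁ κ₂ κ₁ ω (phivec κ₁ ω + t • psivec κ₁ ω)
      = Sfun κ₁ κ₂ κ₁ ω (phivec κ₁ ω)
        + t^2 * ((1/(2*κ₁)) * ((∫ x : ℝ, (phiD ω x)^2)
            + ω * (∫ x : ℝ, (phiW ω x)^2) - ∫ x : ℝ, (phiW ω x)^4))
        + t^4 * (-(κ₂/(4*κ₁^2)) * ∫ x : ℝ, (phiW ω x)^4) := by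
  have hk := Real.sq_sqrt hκ₁.le
  have hkne : κ₁ ≠ 0 := hκ₁.ne'
  -- components of the perturbed pair
  have hu : phivec κ₁ ω + t • psivec κ₁ ω
      = (fun x => ((phiW ω x / Real.sqrt κ₁ : ℝ) : ℂ),
         fun x => ((t * (phiW ω x / Real.sqrt κ₁) : ℝ) : ℂ)) := by
    refine Prod.ext ?_ ?_
    · funext x
      simp [phivec, psivec]
    · funext x
      simp [phivec, psivec, Complex.real_smul]
  -- derivatives
  have hd1 : ∀ x : ℝ, deriv (fun y : ℝ => ((phiW ω y / Real.sqrt κ₁ : ℝ) : ℂ)) x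
      = ((phiD ω x / Real.sqrt κ₁ : ℝ) : ℂ) :=
    fun x => (((phiW_hasDeriv ω x).div_const (Real.sqrt κ₁)).ofReal_comp).deriv
  have hd2 : ∀ x : ℝ, deriv (fun y : ℝ => ((t * (phiW ω y / Real.sqrt κ₁) : ℝ) : ℂ)) x
      = ((t * (phiD ω x / Real.sqrt κ₁) : ℝ) : ℂ) :=
    fun x => ((((phiW_hasDeriv ω x).div_const (Real.sqrt κ₁)).const_mul t).ofReal_comp).deriv
  -- the integrals
  have hT1 : (∫ x : ℝ, ‖deriv (fun y : ℝ => ((phiW ω y / Real.sqrt κ₁ : ℝ) : ℂ)) x‖^2)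
      = (∫ x : ℝ, (phiD ω x)^2) / κ₁ := by
    have e : (fun x : ℝ => ‖deriv (fun y : ℝ => ((phiW ω y / Real.sqrt κ₁ : ℝ) : ℂ)) x‖^2)
        = fun x => (phiD ω x)^2 / κ₁ := by
      funext x
      rw [hd1 x, Complex.norm_real, Real.norm_eq_abs, sq_abs, div_pow, hk]
    rw [e, integral_div]
  have hT3 : (∫ x : ℝ, ‖deriv (fun y : ℝ => ((t * (phiW ω y / Real.sqrt κ₁) : ℝ) : ℂ)) x‖^2)
      = t^2 * ((∫ x : ℝ, (phiD ω x)^2) / κ₁) := by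
    have e : (fun x : ℝ => ‖deriv (fun y : ℝ => ((t * (phiW ω y / Real.sqrt κ₁) : ℝ) : ℂ)) x‖^2)
        = fun x => t^2 * ((phiD ω x)^2 / κ₁) := by
      funext x
      rw [hd2 x, Complex.norm_real, Real.norm_eq_abs, sq_abs, mul_pow, div_pow, hk]
    rw [e, MeasureTheory.integral_const_mul, integral_div]
  have hT2 : (∫ x : ℝ, ‖((phiW ω x / Real.sqrt κ₁ : ℝ) : ℂ)‖^4)
      = (∫ x : ℝ, (phiW ω x)^4) / κ₁^2 := by
    have e : (fun x : ℝ => ‖((phiW ω x / Real.sqrt κ₁ : ℝ) : ℂ)‖^4)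
        = fun x => (phiW ω x)^4 / κ₁^2 := by
      funext x
      rw [Complex.norm_real, Real.norm_eq_abs, habs4, div_pow]
      congr 1
      rw [show (4:ℕ) = 2*2 from rfl, pow_mul, hk]
    rw [e, integral_div]
  have hT4 : (∫ x : ℝ, ‖((t * (phiW ω x / Real.sqrt κ₁) : ℝ) : ℂ)‖^4)
      = t^4 * ((∫ x : ℝ, (phiW ω x)^4) / κ₁^2) := by
    have e : (fun x : ℝ => ‖((t * (phiW ω x / Real.sqrt κ₁) : ℝ) : ℂ)‖^4)
        = fun x => t^4 * ((phiW ω x)^4 / κ₁^2) := by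
      funext x
      rw [Complex.norm_real, Real.norm_eq_abs, habs4, mul_pow, div_pow]
      congr 2
      rw [show (4:ℕ) = 2*2 from rfl, pow_mul, hk]
    rw [e, MeasureTheory.integral_const_mul, integral_div]
  have hT5 : (∫ x : ℝ, (((phiW ω x / Real.sqrt κ₁ : ℝ) : ℂ))^2
        * (starRingEnd ℂ ((t * (phiW ω x / Real.sqrt κ₁) : ℝ) : ℂ))^2).re
      = t^2 * ((∫ x : ℝ, (phiW ω x)^4) / κ₁^2) := by
    have e : (fun x : ℝ => (((phiW ω x / Real.sqrt κ₁ : ℝ) : ℂ))^2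
          * (starRingEnd ℂ ((t * (phiW ω x / Real.sqrt κ₁) : ℝ) : ℂ))^2)
        = fun x => ((t^2 * ((phiW ω x)^4 / κ₁^2) : ℝ) : ℂ) := by
      funext x
      rw [Complex.conj_ofReal, ← Complex.ofReal_pow, ← Complex.ofReal_pow,
        ← Complex.ofReal_mul]
      congr 1
      rw [div_pow, mul_pow, div_pow, hk]
      field_simp
    have hcast : (∫ x : ℝ, ((t^2 * ((phiW ω x)^4 / κ₁^2) : ℝ) : ℂ))
        = ((∫ x : ℝ, t^2 * ((phiW ω x)^4 / κ₁^2) : ℝ) : ℂ) := integral_ofReal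
    rw [e, hcast, Complex.ofReal_re, MeasureTheory.integral_const_mul, integral_div]
  have hT6 : (∫ x : ℝ, ‖((phiW ω x / Real.sqrt κ₁ : ℝ) : ℂ)‖^2)
      = (∫ x : ℝ, (phiW ω x)^2) / κ₁ := by
    have e : (fun x : ℝ => ‖((phiW ω x / Real.sqrt κ₁ : ℝ) : ℂ)‖^2)
        = fun x => (phiW ω x)^2 / κ₁ := by
      funext x
      rw [Complex.norm_real, Real.norm_eq_abs, sq_abs, div_pow, hk]
    rw [e, integral_div]
  have hT7 : (∫ x : ℝ, ‖((t * (phiW ω x / Real.sqrt κ₁) : ℝ) : ℂ)‖^2)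
      = t^2 * ((∫ x : ℝ, (phiW ω x)^2) / κ₁) := by
    have e : (fun x : ℝ => ‖((t * (phiW ω x / Real.sqrt κ₁) : ℝ) : ℂ)‖^2)
        = fun x => t^2 * ((phiW ω x)^2 / κ₁) := by
      funext x
      rw [Complex.norm_real, Real.norm_eq_abs, sq_abs, mul_pow, div_pow, hk]
    rw [e, MeasureTheory.integral_const_mul, integral_div]
  -- the base point
  have hS0 : Sfun κ₁ κ₂ κ₁ ω (phivec κ₁ ω)
      = (1/2) * ((∫ x : ℝ, (phiD ω x)^2) / κ₁)
        - (κ₁/4) * ((∫ x : ℝ, (phiW ω x)^4) / κ₁^2)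
        + ω * ((1/2) * ((∫ x : ℝ, (phiW ω x)^2) / κ₁)) := by
    simp only [Sfun, En, Qm, phivec]
    rw [hT1, hT2, hT6]
    simp
  rw [hu, hS0]
  simp only [Sfun, En, Qm]
  rw [hT1, hT2, hT3, hT4, hT5, hT6, hT7]
  field_simp
  ring

end AuxLemmas

/-- degenerate case `γ = κ₁`: for all `λ ∈ ℝ`, exactly
`S_ω(⃗φ_ω + λ⃗ψ_ω) = S_ω(⃗φ_ω) + (ν₁/24)λ⁴` and
`⟨S_ω'(⃗φ_ω + λ⃗ψ_ω), ⃗ψ_ω⟩ = (ν₁/6)λ³`, where `ν₁ = -(6κ₂/κ₁²)‖φ_ω‖⁴_{L⁴}`. -/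
theorem action_along_psivec (κ₁ κ₂ ω : ℝ)
    (hκ₁ : 0 < κ₁) (hκ₂ : 0 < κ₂) (hω : 0 < ω)
    (ν₁ : ℝ) (hν₁ : ν₁ = -(6 * κ₂ / κ₁ ^ 2) * ∫ x : ℝ, (phiW ω x) ^ 4) :
    ∀ lam : ℝ,
      Sfun κ₁ κ₂ κ₁ ω (phivec κ₁ ω + lam • psivec κ₁ ω)
        = Sfun κ₁ κ₂ κ₁ ω (phivec κ₁ ω) + (ν₁ / 24) * lam ^ 4 ∧
      deriv (fun t : ℝ => Sfun κ₁ κ₂ κ₁ ω (phivec κ₁ ω + t • psivec κ₁ ω)) lam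
        = (ν₁ / 6) * lam ^ 3 := by
  intro lam
  have hline : ∀ t : ℝ, Sfun κ₁ κ₂ κ₁ ω (phivec κ₁ ω + t • psivec κ₁ ω)
      = Sfun κ₁ κ₂ κ₁ ω (phivec κ₁ ω) + (ν₁ / 24) * t ^ 4 := by
    intro t
    rw [Sfun_expand κ₁ κ₂ ω hκ₁ t, phi_combo hω, hν₁]
    ring
  refine ⟨hline lam, ?_⟩
  have hfe : (fun t : ℝ => Sfun κ₁ κ₂ κ₁ ω (phivec κ₁ ω + t • psivec κ₁ ω))
      = fun t => Sfun κ₁ κ₂ κ₁ ω (phivec κ₁ ω) + (ν₁ / 24) * t ^ 4 := funext hline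
  rw [hfe]
  have hd : HasDerivAt (fun t : ℝ => Sfun κ₁ κ₂ κ₁ ω (phivec κ₁ ω) + (ν₁ / 24) * t ^ 4)
      ((ν₁ / 24) * (((4:ℕ):ℝ) * lam ^ 3)) lam :=
    ((hasDerivAt_pow 4 lam).const_mul (ν₁ / 24)).const_add _
  rw [hd.deriv]
  push_cast
  ring
end

section
/- In the degenerate case γ = κ₁ with κ₂ > κ₁, along the mass-preserving curve ⃗φ_λ = ⃗φ_ω + λ⃗ψ_ω + (√(1−λ²)−1)⃗φ_ω one has E(⃗φ_ω) − E(⃗φ_λ) = −ν₀λ⁴ + o(λ⁴) as λ → 0, and hence E(⃗φ_λ) < E(⃗φ_ω) for all sufficiently small λ ≠ 0, where ν₀ = ((κ₁−κ₂)/(4κ₁²))‖φ_ω‖⁴_{L⁴} < 0. -/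
open MeasureTheory Real Asymptotics

lemma phiW_pos {ω : ℝ} (hω : 0 < ω) (x : ℝ) : 0 < phiW ω x := by
  unfold phiW
  have := Real.cosh_pos (x := Real.sqrt ω * x)
  positivity

lemma phiW_diff (ω : ℝ) : Differentiable ℝ (phiW ω) := by
  unfold phiW
  simp only [one_div]
  have h1 : Differentiable ℝ fun x : ℝ => Real.cosh (Real.sqrt ω * x) :=
    (differentiable_id.const_mul (Real.sqrt ω)).cosh
  exact (h1.inv (fun x => (Real.cosh_pos _).ne')).const_mul _

lemma phiW4_bound {ω : ℝ} (hω : 0 < ω) (x : ℝ) :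
    (phiW ω x) ^ 4 ≤ (64 * ω ^ 2 * max 1 ω⁻¹) * (1 + x ^ 2)⁻¹ := by
  set t := Real.sqrt ω * x with ht
  have hc : (1 + |t|) / 2 ≤ Real.cosh t := by
    rw [Real.cosh_eq]
    rcases abs_cases t with ⟨h1, _⟩ | ⟨h1, _⟩
    · nlinarith [Real.add_one_le_exp t, (Real.exp_pos (-t)).le]
    · nlinarith [Real.add_one_le_exp (-t), (Real.exp_pos t).le]
  have hcpos : (0:ℝ) < Real.cosh t := Real.cosh_pos t
  have habs : (0:ℝ) ≤ |t| := abs_nonneg t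
  have h1 : 1 / Real.cosh t ≤ 2 / (1 + |t|) := by
    rw [div_le_div_iff₀ hcpos (by positivity)]
    linarith
  have h2 : (1 / Real.cosh t) ^ 4 ≤ (2 / (1 + |t|)) ^ 4 := by
    apply pow_le_pow_left₀ (by positivity) h1
  have ht2 : t ^ 2 = ω * x ^ 2 := by
    rw [ht, mul_pow, Real.sq_sqrt hω.le]
  have h3 : (2 / (1 + |t|)) ^ 4 ≤ 16 / (1 + ω * x ^ 2) := by
    rw [div_pow, div_le_div_iff₀ (by positivity) (by positivity)]
    have hq : 1 + ω * x ^ 2 ≤ (1 + |t|) ^ 4 := by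
      have h4 : t ^ 2 = |t| ^ 2 := (sq_abs t).symm
      nlinarith [pow_nonneg habs 2, pow_nonneg habs 3, pow_nonneg habs 4]
    nlinarith [pow_nonneg habs 4]
  have hphi : (phiW ω x) ^ 4 = 4 * ω ^ 2 * (1 / Real.cosh t) ^ 4 := by
    unfold phiW
    rw [mul_pow, show (4:ℕ) = 2 * 2 from rfl, pow_mul, Real.sq_sqrt (by positivity)]
    ring
  set m := max 1 ω⁻¹ with hm
  have hm1 : (1:ℝ) ≤ m := le_max_left _ _
  have hm2 : (1:ℝ) ≤ m * ω := by
    have : ω⁻¹ ≤ m := le_max_right _ _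
    calc (1:ℝ) = ω⁻¹ * ω := by field_simp
    _ ≤ m * ω := by nlinarith
  have h5 : 4 * ω ^ 2 * (16 / (1 + ω * x ^ 2)) ≤ (64 * ω ^ 2 * m) * (1 + x ^ 2)⁻¹ := by
    rw [← div_eq_mul_inv]
    have hl : 4 * ω ^ 2 * (16 / (1 + ω * x ^ 2)) = 64 * ω ^ 2 / (1 + ω * x ^ 2) := by ring
    rw [hl, div_le_div_iff₀ (by positivity) (by positivity)]
    nlinarith [sq_nonneg x, mul_pos hω hω, sq_nonneg (x*ω)]
  calc (phiW ω x) ^ 4 = 4 * ω ^ 2 * (1 / Real.cosh t) ^ 4 := hphi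
  _ ≤ 4 * ω ^ 2 * (16 / (1 + ω * x ^ 2)) := by nlinarith [h2.trans h3, mul_pos hω hω]
  _ ≤ (64 * ω ^ 2 * m) * (1 + x ^ 2)⁻¹ := h5

lemma phiW4_integrable {ω : ℝ} (hω : 0 < ω) :
    Integrable (fun x => (phiW ω x) ^ 4) := by
  refine Integrable.mono' (integrable_inv_one_add_sq.const_mul (64 * ω ^ 2 * max 1 ω⁻¹))
    ((phiW_cont ω).pow 4).aestronglyMeasurable ?_
  filter_upwards with x
  rw [Real.norm_eq_abs, abs_of_nonneg (by positivity)]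
  exact phiW4_bound hω x

lemma phiW4_integral_pos {ω : ℝ} (hω : 0 < ω) :
    0 < ∫ x : ℝ, (phiW ω x) ^ 4 := by
  rw [integral_pos_iff_support_of_nonneg (fun x => by positivity) (phiW4_integrable hω)]
  have hs : (Function.support fun x => (phiW ω x) ^ 4) = Set.univ :=
    Set.eq_univ_of_forall fun x => Function.mem_support.mpr
      (by have := phiW_pos hω x; positivity)
  rw [hs, Real.volume_univ]
  exact ENNReal.zero_lt_top

lemma deriv_ofReal_mul {g : ℝ → ℝ} (hg : Differentiable ℝ g) (c : ℝ) (x : ℝ) :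
    deriv (fun y => ((c * g y : ℝ) : ℂ)) x = ((c * deriv g x : ℝ) : ℂ) :=
  (((hg x).hasDerivAt.const_mul c).ofReal_comp).deriv

lemma En_scaled (κ₁ κ₂ γ : ℝ) {g : ℝ → ℝ} (hg : Differentiable ℝ g) (a b : ℝ) :
    En κ₁ κ₂ γ (fun x => ((a * g x : ℝ) : ℂ), fun x => ((b * g x : ℝ) : ℂ))
    = (a ^ 2 + b ^ 2) / 2 * (∫ x : ℝ, (deriv g x) ^ 2)
      - ((κ₁ * a ^ 4 + κ₂ * b ^ 4 + 2 * γ * a ^ 2 * b ^ 2) / 4) * (∫ x : ℝ, (g x) ^ 4) := by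
  have I1 : ∀ c : ℝ, (∫ x : ℝ, ‖deriv (fun y => ((c * g y : ℝ) : ℂ)) x‖ ^ 2)
      = c ^ 2 * ∫ x : ℝ, (deriv g x) ^ 2 := by
    intro c
    rw [← integral_const_mul]
    congr 1; funext x
    rw [deriv_ofReal_mul hg c x, Complex.norm_real, Real.norm_eq_abs, sq_abs, mul_pow]
  have I2 : ∀ c : ℝ, (∫ x : ℝ, ‖((c * g x : ℝ) : ℂ)‖ ^ 4)
      = c ^ 4 * ∫ x : ℝ, (g x) ^ 4 := by
    intro c
    rw [← integral_const_mul]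
    congr 1; funext x
    rw [Complex.norm_real, Real.norm_eq_abs, ← abs_pow, abs_of_nonneg (by positivity), mul_pow]
  have I3 : (∫ x : ℝ, (((a * g x : ℝ) : ℂ)) ^ 2 * (starRingEnd ℂ ((b * g x : ℝ) : ℂ)) ^ 2).re
      = a ^ 2 * b ^ 2 * ∫ x : ℝ, (g x) ^ 4 := by
    have h : (fun x : ℝ => (((a * g x : ℝ) : ℂ)) ^ 2 * (starRingEnd ℂ ((b * g x : ℝ) : ℂ)) ^ 2)
        = fun x : ℝ => ((a ^ 2 * b ^ 2 * (g x) ^ 4 : ℝ) : ℂ) := by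
      funext x; rw [Complex.conj_ofReal]; push_cast; ring
    rw [h]
    have h2 := integral_ofReal (𝕜 := ℂ) (f := fun x : ℝ => a ^ 2 * b ^ 2 * (g x) ^ 4)
      (μ := (volume : Measure ℝ))
    rw [show (fun x : ℝ => ((a ^ 2 * b ^ 2 * (g x) ^ 4 : ℝ) : ℂ))
        = (fun x : ℝ => (RCLike.ofReal (a ^ 2 * b ^ 2 * (g x) ^ 4) : ℂ)) from rfl, h2]
    rw [show ∀ r : ℝ, ((RCLike.ofReal r : ℂ)).re = r from fun r => rfl, integral_const_mul]
  simp only [En]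
  rw [I1 a, I1 b, I2 a, I2 b, I3]
  ring

/-- degenerate case `γ = κ₁ < κ₂`: along the mass-preserving curve
`⃗φ_λ = ⃗φ_ω + λ⃗ψ_ω + (√(1-λ²)-1)⃗φ_ω` one has
`E(⃗φ_ω) - E(⃗φ_λ) = -ν₀λ⁴ + o(λ⁴)` as `λ → 0`, where
`ν₀ = ((κ₁-κ₂)/(4κ₁²))‖φ_ω‖⁴_{L⁴} < 0`; hence `E(⃗φ_λ) < E(⃗φ_ω)` for all
sufficiently small `λ ≠ 0`. -/
theorem energy_decreases_along_curve (κ₁ κ₂ ω : ℝ)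
    (hκ₁ : 0 < κ₁) (hκ : κ₁ < κ₂) (hω : 0 < ω)
    (ν₀ : ℝ) (hν₀ : ν₀ = ((κ₁ - κ₂) / (4 * κ₁ ^ 2)) * ∫ x : ℝ, (phiW ω x) ^ 4)
    (curve : ℝ → Pair)
    (hcurve : ∀ lam : ℝ, curve lam = phivec κ₁ ω + lam • psivec κ₁ ω
        + (Real.sqrt (1 - lam ^ 2) - 1) • phivec κ₁ ω) :
    ν₀ < 0 ∧
    (fun lam : ℝ => En κ₁ κ₂ κ₁ (phivec κ₁ ω) - En κ₁ κ₂ κ₁ (curve lam)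
        - (-ν₀ * lam ^ 4)) =o[nhds (0 : ℝ)] (fun lam : ℝ => lam ^ 4) ∧
    ∃ δ > 0, ∀ lam : ℝ, lam ≠ 0 → |lam| < δ →
      En κ₁ κ₂ κ₁ (curve lam) < En κ₁ κ₂ κ₁ (phivec κ₁ ω) := by
    -- setup
  set g : ℝ → ℝ := fun x => phiW ω x / Real.sqrt κ₁ with hgdef
  have hg : Differentiable ℝ g := (phiW_diff ω).div_const _
  have hsqκ : (Real.sqrt κ₁) ^ 4 = κ₁ ^ 2 := by
    rw [show (4:ℕ) = 2 * 2 from rfl, pow_mul, Real.sq_sqrt hκ₁.le]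
  have hP : (∫ x : ℝ, (g x) ^ 4) = (κ₁ ^ 2)⁻¹ * ∫ x : ℝ, (phiW ω x) ^ 4 := by
    rw [← integral_const_mul]
    congr 1; funext x
    rw [hgdef]
    rw [div_pow, hsqκ, div_eq_inv_mul]
  have hφpair : phivec κ₁ ω
      = (fun x => ((1 * g x : ℝ) : ℂ), fun x => ((0 * g x : ℝ) : ℂ)) := by
    unfold phivec
    refine Prod.ext ?_ ?_ <;> funext x <;> simp [hgdef]
  have hc1 : ∀ lam : ℝ, curve lam
      = (fun x => ((Real.sqrt (1 - lam ^ 2) * g x : ℝ) : ℂ),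
         fun x => ((lam * g x : ℝ) : ℂ)) := by
    intro lam
    rw [hcurve lam]
    refine Prod.ext ?_ ?_ <;> funext x <;>
      simp [phivec, psivec, hgdef, Prod.fst_add, Prod.snd_add, Pi.add_apply,
        Prod.smul_fst, Prod.smul_snd, Pi.smul_apply, Complex.real_smul] <;>
      push_cast <;> ring
  have hIpos : 0 < ∫ x : ℝ, (phiW ω x) ^ 4 := phiW4_integral_pos hω
  have hν₀neg : ν₀ < 0 := by
    rw [hν₀]
    apply mul_neg_of_neg_of_pos _ hIpos
    apply div_neg_of_neg_of_pos (by linarith) (by positivity)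
  have key : ∀ lam : ℝ, |lam| ≤ 1 →
      En κ₁ κ₂ κ₁ (phivec κ₁ ω) - En κ₁ κ₂ κ₁ (curve lam) = -ν₀ * lam ^ 4 := by
    intro lam hlam
    have hlam2 : (0:ℝ) ≤ 1 - lam ^ 2 := by
      have := sq_abs lam
      nlinarith [abs_nonneg lam]
    have h2 : Real.sqrt (1 - lam ^ 2) ^ 2 = 1 - lam ^ 2 := Real.sq_sqrt hlam2
    have h4 : Real.sqrt (1 - lam ^ 2) ^ 4 = (1 - lam ^ 2) ^ 2 := by
      rw [show (4:ℕ) = 2 * 2 from rfl, pow_mul, h2]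
    rw [hφpair, hc1 lam, En_scaled κ₁ κ₂ κ₁ hg 1 0,
      En_scaled κ₁ κ₂ κ₁ hg (Real.sqrt (1 - lam ^ 2)) lam, hP, hν₀, h2, h4]
    have hκ₁' : κ₁ ≠ 0 := hκ₁.ne'
    field_simp
    ring
  refine ⟨hν₀neg, ?_, 1, one_pos, ?_⟩
  · have hev : (fun lam : ℝ => En κ₁ κ₂ κ₁ (phivec κ₁ ω) - En κ₁ κ₂ κ₁ (curve lam)
        - (-ν₀ * lam ^ 4)) =ᶠ[nhds (0 : ℝ)] (fun _ => (0:ℝ)) := by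
      have hball : ∀ᶠ lam : ℝ in nhds (0 : ℝ), |lam| < 1 := by
        have := Metric.ball_mem_nhds (0 : ℝ) one_pos
        filter_upwards [this] with lam hlam
        simpa [Real.dist_eq] using hlam
      filter_upwards [hball] with lam hlam
      rw [key lam hlam.le]
      ring
    exact hev.trans_isLittleO (isLittleO_zero _ _)
  · intro lam hne hlt
    have h := key lam hlt.le
    have hl4 : 0 < lam ^ 4 := by positivity
    nlinarith
end
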